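/- arXiv:1111.1825 — 5 statements merged into one kernel-verified Lean document; each statement's English description precedes it below -/
import Mathlib

section
/- Let f:(0,∞)→(0,∞) be a Kneser function of order d≥1, i.e. f(λb)−f(λa) ≤ λ^d (f(b)−f(a)) for all 0<a≤b and λ≥1. Then the right derivative f'_+(r) exists at every r>0 and the function r ↦ f'_+(r)/r^{d−1} is non-increasing on (0,∞). -/
open Filter Set Topology

/-- A Kneser function of order `d`: a positive function on `(0,∞)` satisfying
`f(λb) − f(λa) ≤ λ^d (f(b) − f(a))` for all `0 < a ≤ b` and `λ ≥ 1`. -/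
def IsKneser (f : ℝ → ℝ) (d : ℝ) : Prop :=
  (∀ x : ℝ, 0 < x → 0 < f x) ∧
  ∀ a b lam : ℝ, 0 < a → a ≤ b → 1 ≤ lam →
    f (lam * b) - f (lam * a) ≤ lam ^ d * (f b - f a)

lemma kneser_mono {f : ℝ → ℝ} {d : ℝ} (hd : 1 ≤ d) (hf : IsKneser f d) :
    ∀ x y : ℝ, 0 < x → x ≤ y → f x ≤ f y := by
  intro x y hx hxy
  rcases eq_or_lt_of_le hxy with rfl | hlt
  · exact le_refl _
  by_contra hcon
  push_neg at hcon
  have hy : 0 < y := hx.trans hlt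
  set lam := y / x with hlam
  have hlam1 : 1 < lam := (one_lt_div hx).2 hlt
  have hlam0 : 0 < lam := by positivity
  have hlx : lam * x = y := div_mul_cancel₀ y hx.ne'
  have hδneg : f y - f x < 0 := by linarith
  have key : ∀ n : ℕ, f (lam ^ n * y) ≤ f y + n * (f y - f x) := by
    intro n
    induction n with
    | zero => simp
    | succ n ih =>
      have h1 : 1 ≤ lam ^ (n+1) := one_le_pow₀ hlam1.le
      have h2 := hf.2 x y (lam ^ (n+1)) hx hxy h1
      have h3 : (lam ^ (n+1) : ℝ) ^ d * (f y - f x) ≤ (f y - f x) := by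
        have h5 : (1:ℝ) ≤ (lam ^ (n+1) : ℝ) ^ d := Real.one_le_rpow h1 (by linarith)
        nlinarith
      have h4 : lam ^ (n+1) * x = lam ^ n * y := by
        rw [pow_succ, mul_assoc, hlx]
      have h6 : f (lam ^ (n+1) * y) ≤ f (lam ^ n * y) + (f y - f x) := by
        rw [← h4]; linarith
      push_cast
      linarith
  obtain ⟨n, hn⟩ := exists_nat_gt (f y / (-(f y - f x)))
  have hyn : 0 < lam ^ n * y := by positivity
  have h7 : f y < n * (-(f y - f x)) := (div_lt_iff₀ (by linarith)).1 hn
  nlinarith [hf.1 _ hyn, key n]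

lemma kneser_chain {f : ℝ → ℝ} {d : ℝ} (hd : 1 ≤ d) (hf : IsKneser f d)
    {r μ : ℝ} (hr : 0 < r) (hμ : 1 ≤ μ) (N : ℕ) :
    f (r * μ ^ N) ≤ f r + (f (r * μ) - f r) * ∑ k ∈ Finset.range N, (μ ^ d) ^ k := by
  have hμ0 : (0:ℝ) < μ := lt_of_lt_of_le one_pos hμ
  have hrμ : r ≤ r * μ := le_mul_of_one_le_right hr.le hμ
  have hδ : 0 ≤ f (r * μ) - f r := by
    have := kneser_mono hd hf r (r * μ) hr hrμ; linarith
  induction N with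
  | zero => simp
  | succ N ih =>
    have h1 : 1 ≤ μ ^ N := one_le_pow₀ hμ
    have h2 := hf.2 r (r * μ) (μ ^ N) hr hrμ h1
    have e1 : μ ^ N * (r * μ) = r * μ ^ (N+1) := by ring
    have e2 : μ ^ N * r = r * μ ^ N := by ring
    have e3 : ((μ : ℝ) ^ N : ℝ) ^ d = (μ ^ d) ^ N := by
      rw [← Real.rpow_natCast μ N, ← Real.rpow_mul hμ0.le, mul_comm,
        Real.rpow_mul hμ0.le, Real.rpow_natCast]
    rw [e1, e2, e3] at h2
    rw [Finset.sum_range_succ]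
    have h3 : 0 ≤ (μ ^ d) ^ N := by positivity
    nlinarith

lemma rpow_pow_comm {μ : ℝ} (hμ : 0 ≤ μ) (d : ℝ) (N : ℕ) :
    ((μ : ℝ) ^ N : ℝ) ^ d = (μ ^ d) ^ N := by
  rw [← Real.rpow_natCast μ N, ← Real.rpow_mul hμ, mul_comm, Real.rpow_mul hμ,
    Real.rpow_natCast]

lemma kneser_star {f : ℝ → ℝ} {d : ℝ} (hd : 1 ≤ d) (hf : IsKneser f d)
    {r s t : ℝ} (hr : 0 < r) (hs : 0 < s) (hst : s ≤ t) :
    f (r * (1 + t)) - f r ≤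
      (f (r * (1 + s)) - f r) * ((((1+t)*(1+s)) ^ d - 1) / ((1+s) ^ d - 1)) := by
  set μ := 1 + s with hμdef
  have hμ : 1 < μ := by simp [hμdef]; linarith
  have hμ0 : (0:ℝ) < μ := by linarith
  have ht : 0 < t := lt_of_lt_of_le hs hst
  set x := μ ^ d with hxdef
  have hx : 1 < x := by
    rw [hxdef]
    exact (Real.one_lt_rpow_iff_of_pos hμ0).2 (Or.inl ⟨hμ, by linarith⟩)
  have hδ : 0 ≤ f (r * μ) - f r := by
    have := kneser_mono hd hf r (r * μ) hr (le_mul_of_one_le_right hr.le hμ.le)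
    linarith
  obtain ⟨n₀, hn₀⟩ := pow_unbounded_of_one_lt (1 + t) hμ
  have hex : ∃ n, 1 + t ≤ μ ^ n := ⟨n₀, hn₀.le⟩
  classical
  set N := Nat.find hex with hNdef
  have hN : 1 + t ≤ μ ^ N := Nat.find_spec hex
  have hNpos : 0 < N := by
    rcases Nat.eq_zero_or_pos N with h0 | h
    · exfalso; rw [h0] at hN; simp at hN; linarith
    · exact h
  have hNm : μ ^ (N - 1) < 1 + t := by
    have := Nat.find_min hex (show N - 1 < N from Nat.sub_lt hNpos one_pos)
    push_neg at this
    exact this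
  have hμN : μ ^ N ≤ (1 + t) * μ := by
    have : μ ^ N = μ ^ (N - 1) * μ := by
      rw [← pow_succ, Nat.sub_add_cancel hNpos]
    rw [this]
    exact mul_le_mul_of_nonneg_right hNm.le hμ0.le
  have hchain := kneser_chain hd hf hr hμ.le N
  rw [geom_sum_eq hx.ne' N] at hchain
  have hmono : f (r * (1 + t)) ≤ f (r * μ ^ N) := by
    apply kneser_mono hd hf _ _ (by positivity)
    have : (1:ℝ) + t ≤ μ ^ N := hN
    nlinarith
  have hxN : x ^ N ≤ ((1+t)*(1+s)) ^ d := by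
    rw [hxdef, ← rpow_pow_comm hμ0.le]
    exact Real.rpow_le_rpow (by positivity) hμN (by linarith)
  have hsum : (x ^ N - 1) / (x - 1) ≤ (((1+t)*(1+s)) ^ d - 1) / (x - 1) :=
    (div_le_div_iff_of_pos_right (by linarith)).2 (by linarith [hxN])
  have h2 : (f (r * μ) - f r) * ((x ^ N - 1) / (x - 1)) ≤
      (f (r * μ) - f r) * ((((1+t)*(1+s)) ^ d - 1) / (x - 1)) :=
    mul_le_mul_of_nonneg_left hsum hδ
  linarith

lemma phi_hasDerivAt {d : ℝ} (hd : 1 ≤ d) :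
    HasDerivAt (fun s : ℝ => (1 + s) ^ d) d 0 := by
  have h1 : HasDerivAt (fun y : ℝ => y ^ d) (d * (1:ℝ) ^ (d-1)) 1 :=
    Real.hasDerivAt_rpow_const (Or.inl one_ne_zero)
  have h2 : HasDerivAt (fun s : ℝ => 1 + s) 1 0 := by
    simpa using (hasDerivAt_id (0:ℝ)).const_add 1
  have h3 := HasDerivAt.comp (x := (0:ℝ)) (by simpa using h1) h2
  simpa [Function.comp_def, Real.one_rpow] using h3

lemma phi_tendsto {d : ℝ} (hd : 1 ≤ d) :
    Tendsto (fun s : ℝ => ((1 + s) ^ d - 1) / s) (𝓝[>] (0:ℝ)) (𝓝 d) := by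
  have h := (phi_hasDerivAt hd)
  rw [hasDerivAt_iff_tendsto_slope] at h
  have h2 : 𝓝[>] (0:ℝ)  ≤ 𝓝[≠] (0:ℝ) :=
    nhdsWithin_mono 0 (fun x hx => ne_of_gt hx)
  refine (h.mono_left h2).congr (fun s => ?_)
  simp [slope, Real.one_rpow]
  ring

lemma phi_inv_tendsto {d : ℝ} (hd : 1 ≤ d) :
    Tendsto (fun s : ℝ => s / ((1 + s) ^ d - 1)) (𝓝[>] (0:ℝ)) (𝓝 (1/d)) := by
  have h := (phi_tendsto hd).inv₀ (by positivity : d ≠ 0)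
  rw [← one_div] at h
  refine h.congr (fun s => ?_)
  rw [← inv_div, inv_inv]

lemma kneser_bdd {f : ℝ → ℝ} {d : ℝ} (hd : 1 ≤ d) (hf : IsKneser f d)
    {r : ℝ} (hr : 0 < r) :
    ∃ M : ℝ, ∀ᶠ t in 𝓝[>] (0:ℝ), (f (r * (1 + t)) - f r) / t ≤ M := by
  set c := r / 2 with hcdef
  have hc : 0 < c := by positivity
  have hcr : c < r := by rw [hcdef]; linarith
  set F := fun x : ℝ => f (max x c) with hFdef
  have hFmono : Monotone F := by
    intro x y hxy
    exact kneser_mono hd hf _ _ (lt_of_lt_of_le hc (le_max_right x c))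
      (max_le_max hxy (le_refl c))
  have hae := hFmono.ae_differentiableAt
  have hEx : ∃ a ∈ Ioo c r, DifferentiableAt ℝ F a := by
    by_contra hcon
    push_neg at hcon
    have hsub : Ioo c r ⊆ {x | ¬ DifferentiableAt ℝ F x} := fun x hx => hcon x hx
    have h0 : MeasureTheory.volume {x | ¬ DifferentiableAt ℝ F x} = 0 := by
      rw [MeasureTheory.ae_iff] at hae; exact hae
    have := MeasureTheory.measure_mono_null hsub h0
    rw [Real.volume_Ioo] at this
    simp [ENNReal.ofReal_eq_zero] at this
    linarith
  obtain ⟨a, ⟨hac, har⟩, hdiff⟩ := hEx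
  have ha0 : 0 < a := hc.trans hac
  have heq : F =ᶠ[𝓝 a] f := by
    filter_upwards [Ioi_mem_nhds hac] with x hx
    simp only [hFdef]
    rw [max_eq_left (le_of_lt hx)]
  have hdf : DifferentiableAt ℝ f a := hdiff.congr_of_eventuallyEq heq.symm
  have hda := hdf.hasDerivAt
  rw [hasDerivAt_iff_tendsto_slope] at hda
  have hmap : Tendsto (fun t : ℝ => a * (1 + t)) (𝓝[>] (0:ℝ)) (𝓝[≠] a) := by
    rw [tendsto_nhdsWithin_iff]
    constructor
    · have : Tendsto (fun t : ℝ => a * (1 + t)) (𝓝 (0:ℝ)) (𝓝 (a * (1 + 0))) :=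
        (continuous_const.mul (continuous_const.add continuous_id)).tendsto 0
      simpa using this.mono_left nhdsWithin_le_nhds
    · filter_upwards [self_mem_nhdsWithin] with t ht
      have : (0:ℝ) < t := ht
      simp only [mem_compl_iff, mem_singleton_iff]
      nlinarith
  have hcomp := hda.comp hmap
  have hqa : Tendsto (fun t : ℝ => (f (a * (1 + t)) - f a) / t) (𝓝[>] (0:ℝ))
      (𝓝 (a * deriv f a)) := by
    refine (hcomp.const_mul a).congr' ?_
    filter_upwards [self_mem_nhdsWithin] with t ht
    have ht0 : (0:ℝ) < t := ht
    show a * slope f a (a * (1 + t)) = (f (a * (1 + t)) - f a) / t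
    rw [slope_def_field]
    have e : a * (1 + t) - a = a * t := by ring
    rw [e, ← mul_div_assoc, mul_div_mul_left _ _ ha0.ne']
  set C := a * deriv f a + 1 with hCdef
  have hev : ∀ᶠ t in 𝓝[>] (0:ℝ), (f (a * (1 + t)) - f a) / t ≤ C :=
    hqa.eventually (eventually_le_nhds (lt_add_one _))
  refine ⟨(r/a) ^ d * C, ?_⟩
  filter_upwards [hev, self_mem_nhdsWithin] with t htC ht
  have ht0 : (0:ℝ) < t := ht
  have hlam : 1 ≤ r / a := (one_le_div ha0).2 har.le
  have h := hf.2 a (a * (1 + t)) (r / a) ha0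
    (le_mul_of_one_le_right ha0.le (by linarith)) hlam
  have e1 : r / a * (a * (1 + t)) = r * (1 + t) := by field_simp
  have e2 : r / a * a = r := div_mul_cancel₀ r ha0.ne'
  rw [e1, e2] at h
  have hpow : (0:ℝ) ≤ (r/a) ^ d := Real.rpow_nonneg (by positivity) d
  calc (f (r * (1 + t)) - f r) / t ≤ ((r/a) ^ d * (f (a * (1 + t)) - f a)) / t := by
        gcongr
      _ = (r/a) ^ d * ((f (a * (1 + t)) - f a) / t) := by ring
      _ ≤ (r/a) ^ d * C := mul_le_mul_of_nonneg_left htC hpow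

lemma kneser_key {f : ℝ → ℝ} {d : ℝ} (hd : 1 ≤ d) (hf : IsKneser f d)
    {r : ℝ} (hr : 0 < r) :
    ∃ l : ℝ, 0 ≤ l ∧
      Tendsto (fun t => (f (r * (1 + t)) - f r) / t) (𝓝[>] (0:ℝ)) (𝓝 l) := by
  have hd0 : (0:ℝ) < d := by linarith
  set q := fun t : ℝ => (f (r * (1 + t)) - f r) / t with hqdef
  have hq0' : ∀ t : ℝ, 0 < t → 0 ≤ q t := by
    intro t ht0
    have h := kneser_mono hd hf r (r * (1 + t)) hr (by nlinarith)
    exact div_nonneg (by linarith) ht0.le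
  have hq0 : ∀ᶠ t in 𝓝[>] (0:ℝ), 0 ≤ q t := by
    filter_upwards [self_mem_nhdsWithin] with t ht
    exact hq0' t ht
  obtain ⟨M, hM⟩ := kneser_bdd hd hf hr
  have hbddA : IsBoundedUnder (· ≤ ·) (𝓝[>] (0:ℝ)) q :=
    isBoundedUnder_of_eventually_le hM
  have hbddB : IsBoundedUnder (· ≥ ·) (𝓝[>] (0:ℝ)) q :=
    isBoundedUnder_of_eventually_ge hq0
  have hcobdd : IsCoboundedUnder (· ≥ ·) (𝓝[>] (0:ℝ)) q :=
    hbddA.isCoboundedUnder_ge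
  set L := liminf q (𝓝[>] (0:ℝ)) with hLdef
  have hL0 : 0 ≤ L := le_liminf_of_le hcobdd hq0
  have hstar : ∀ t s : ℝ, 0 < s → s ≤ t →
      q t ≤ q s * (s * ((((1+t)*(1+s)) ^ d - 1) / (t * ((1+s) ^ d - 1)))) := by
    intro t s hs hst
    have ht0 : 0 < t := lt_of_lt_of_le hs hst
    have h := kneser_star hd hf hr hs hst
    have hden : 0 < (1+s) ^ d - 1 := by
      have : 1 < ((1:ℝ)+s) ^ d :=
        (Real.one_lt_rpow_iff_of_pos (by linarith)).2 (Or.inl ⟨by linarith, hd0⟩)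
      linarith
    have e : q s * (s * ((((1+t)*(1+s)) ^ d - 1) / (t * ((1+s) ^ d - 1)))) =
        ((f (r*(1+s)) - f r) * ((((1+t)*(1+s)) ^ d - 1) / ((1+s) ^ d - 1))) / t := by
      simp only [hqdef]
      have hB : (1+s) ^ d - 1 ≠ 0 := ne_of_gt hden
      field_simp
    rw [e]
    show (f (r * (1 + t)) - f r) / t ≤ _ / t
    gcongr
  have hkey : ∀ t : ℝ, 0 < t → q t ≤ L * ((1/d) * (((1+t) ^ d - 1) / t)) := by
    intro t ht
    set G := (1/d) * (((1+t) ^ d - 1) / t) with hGdef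
    have hεbound : ∀ ε : ℝ, 0 < ε → q t ≤ (L + ε) * (G + ε) := by
      intro ε hε
      have hg : Tendsto
          (fun s : ℝ => s * ((((1+t)*(1+s)) ^ d - 1) / (t * ((1+s) ^ d - 1))))
          (𝓝[>] (0:ℝ)) (𝓝 G) := by
        have h1 := phi_inv_tendsto hd
        have h2 : Tendsto (fun s : ℝ => (((1+t)*(1+s)) ^ d - 1) / t)
            (𝓝 (0:ℝ)) (𝓝 ((((1+t)*(1+0:ℝ)) ^ d - 1) / t)) := by
          have hc : ContinuousAt (fun s : ℝ => ((1+t)*(1+s)) ^ d) 0 :=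
            ContinuousAt.rpow_const (by fun_prop) (Or.inl (by norm_num; linarith))
          exact (hc.sub continuousAt_const).div_const t
        have h3 := h1.mul (h2.mono_left nhdsWithin_le_nhds)
        have hval : (1/d) * ((((1+t)*(1+0:ℝ)) ^ d - 1) / t) = G := by
          rw [hGdef]; norm_num
        rw [hval] at h3
        refine h3.congr (fun s => ?_)
        rw [div_mul_div_comm, mul_comm ((1+s) ^ d - 1) t, mul_div_assoc]
      have hfreq : ∃ᶠ s in 𝓝[>] (0:ℝ), q s < L + ε :=
        frequently_lt_of_liminf_lt hcobdd (by linarith)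
      have hev2 : ∀ᶠ s in 𝓝[>] (0:ℝ),
          s * ((((1+t)*(1+s)) ^ d - 1) / (t * ((1+s) ^ d - 1))) < G + ε :=
        hg.eventually (eventually_lt_nhds (by linarith))
      have hev3 : ∀ᶠ s in 𝓝[>] (0:ℝ), s ∈ Ioc 0 t :=
        eventually_of_mem (Ioc_mem_nhdsGT_of_mem ⟨le_refl 0, ht⟩) (fun s hs => hs)
      obtain ⟨s, hsq, hsg, hsm⟩ := (hfreq.and_eventually (hev2.and hev3)).exists
      have hs0 : 0 < s := hsm.1
      have hst : s ≤ t := hsm.2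
      have h4 := hstar t s hs0 hst
      have hGpos : 0 ≤ G + ε := by
        have hnum : 0 ≤ ((1:ℝ)+t) ^ d - 1 := by
          have : (1:ℝ) ≤ (1+t) ^ d := Real.one_le_rpow (by linarith) (by linarith)
          linarith
        have : 0 ≤ G := by rw [hGdef]; positivity
        linarith
      calc q t ≤ q s * (s * ((((1+t)*(1+s)) ^ d - 1) / (t * ((1+s) ^ d - 1)))) := h4
        _ ≤ (L + ε) * (G + ε) := by
            apply mul_le_mul hsq.le hsg.le ?_ (by linarith)
            have hnum : 0 ≤ ((1+t)*(1+s)) ^ d - 1 := by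
              have : (1:ℝ) ≤ ((1+t)*(1+s)) ^ d :=
                Real.one_le_rpow (by nlinarith) (by linarith)
              linarith
            have hden : 0 < (1+s) ^ d - 1 := by
              have : 1 < ((1:ℝ)+s) ^ d :=
                (Real.one_lt_rpow_iff_of_pos (by linarith)).2 (Or.inl ⟨by linarith, hd0⟩)
              linarith
            positivity
    have hlim : Tendsto (fun ε : ℝ => (L + ε) * (G + ε)) (𝓝[>] (0:ℝ))
        (𝓝 ((L + 0) * (G + 0))) := by
      apply Tendsto.mono_left ?_ nhdsWithin_le_nhds
      exact ((continuous_const.add continuous_id).mul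
        (continuous_const.add continuous_id)).tendsto 0
    have : q t ≤ (L + 0) * (G + 0) := by
      refine ge_of_tendsto hlim ?_
      filter_upwards [self_mem_nhdsWithin] with ε hε
      exact hεbound ε hε
    simpa using this
  refine ⟨L, hL0, ?_⟩
  rw [tendsto_order]
  constructor
  · intro b hb
    exact eventually_lt_of_lt_liminf hb hbddB
  · intro b hb
    have hGlim : Tendsto (fun t : ℝ => L * ((1/d) * (((1+t) ^ d - 1) / t)))
        (𝓝[>] (0:ℝ)) (𝓝 L) := by
      have h5 := (phi_tendsto hd).const_mul (L * (1/d))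
      have hval : L * (1/d) * d = L := by field_simp
      rw [hval] at h5
      refine h5.congr (fun s => ?_)
      ring
    have h1 : ∀ᶠ t in 𝓝[>] (0:ℝ), L * ((1/d) * (((1+t) ^ d - 1) / t)) < b :=
      hGlim.eventually (eventually_lt_nhds hb)
    filter_upwards [h1, self_mem_nhdsWithin] with t h1t ht
    exact lt_of_le_of_lt (hkey t ht) h1t

lemma tendsto_to_hasDerivWithinAt {f : ℝ → ℝ} {r l : ℝ} (hr : 0 < r)
    (h : Tendsto (fun t => (f (r * (1 + t)) - f r) / t) (𝓝[>] (0:ℝ)) (𝓝 l)) :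
    HasDerivWithinAt f (l / r) (Ioi r) r := by
  rw [hasDerivWithinAt_iff_tendsto_slope,
    Set.diff_singleton_eq_self (notMem_Ioi.2 (le_refl r))]
  have hmap : Tendsto (fun y : ℝ => y / r - 1) (𝓝[Ioi r] r) (𝓝[>] (0:ℝ)) := by
    rw [tendsto_nhdsWithin_iff]
    constructor
    · have : Tendsto (fun y : ℝ => y / r - 1) (𝓝 r) (𝓝 (r / r - 1)) :=
        ((continuous_id.div_const r).sub continuous_const).tendsto r
      rw [div_self hr.ne'] at this
      simpa using this.mono_left nhdsWithin_le_nhds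
    · filter_upwards [self_mem_nhdsWithin] with y hy
      have : r < y := hy
      have : 1 < y / r := (one_lt_div hr).2 this
      simp only [mem_Ioi]
      linarith
  have hc := (h.comp hmap).div_const r
  refine hc.congr' ?_
  filter_upwards [self_mem_nhdsWithin] with y hy
  have hyr : r < y := hy
  have e1 : r * (1 + (y / r - 1)) = y := by field_simp; ring
  show (f (r * (1 + (y / r - 1))) - f r) / (y / r - 1) / r = slope f r y
  rw [slope_def_field, e1, div_div]
  congr 1
  field_simp

theorem kneser_rightDeriv_exists_and_antitone (f : ℝ → ℝ) (d : ℝ) (hd : 1 ≤ d)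
    (hf : IsKneser f d) :
    (∀ r : ℝ, 0 < r → ∃ D : ℝ, HasDerivWithinAt f D (Set.Ioi r) r) ∧
    AntitoneOn (fun r => derivWithin f (Set.Ioi r) r / r ^ (d - 1)) (Set.Ioi 0) := by
  have H : ∀ r : ℝ, 0 < r → ∃ l : ℝ, 0 ≤ l ∧
      Tendsto (fun t => (f (r * (1 + t)) - f r) / t) (𝓝[>] (0:ℝ)) (𝓝 l) :=
    fun r hr => kneser_key hd hf hr
  choose! l hl0 hltend using H
  have hD : ∀ r : ℝ, 0 < r → HasDerivWithinAt f (l r / r) (Ioi r) r :=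
    fun r hr => tendsto_to_hasDerivWithinAt hr (hltend r hr)
  have hdw : ∀ r : ℝ, 0 < r → derivWithin f (Ioi r) r = l r / r :=
    fun r hr => (hD r hr).derivWithin (uniqueDiffWithinAt_Ioi r)
  constructor
  · exact fun r hr => ⟨l r / r, hD r hr⟩
  · intro r hrmem s hsmem hrs
    have hr : 0 < r := hrmem
    have hs : 0 < s := hsmem
    simp only
    rw [hdw r hr, hdw s hs]
    -- pointwise comparison of difference quotients
    have hcomp : ∀ t : ℝ, t ∈ Ioi (0:ℝ) →
        (f (s * (1 + t)) - f s) / t ≤ (s/r) ^ d * ((f (r * (1 + t)) - f r) / t) := by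
      intro t ht
      have ht0 : (0:ℝ) < t := ht
      have h := hf.2 r (r * (1 + t)) (s / r) hr
        (le_mul_of_one_le_right hr.le (by linarith)) ((one_le_div hr).2 hrs)
      have e1 : s / r * (r * (1 + t)) = s * (1 + t) := by field_simp
      have e2 : s / r * r = s := div_mul_cancel₀ s hr.ne'
      rw [e1, e2] at h
      rw [mul_div_assoc'] at *
      calc (f (s * (1 + t)) - f s) / t ≤ ((s/r) ^ d * (f (r * (1 + t)) - f r)) / t := by
            gcongr
        _ = (s/r) ^ d * (f (r * (1 + t)) - f r) / t := by ring
    have hle : l s ≤ (s/r) ^ d * l r := by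
      refine le_of_tendsto_of_tendsto (hltend s hs) ((hltend r hr).const_mul _) ?_
      filter_upwards [self_mem_nhdsWithin] with t ht
      exact hcomp t ht
    have key : ∀ x : ℝ, 0 < x → ∀ L : ℝ, L / x / x ^ (d-1) = L / x ^ d := by
      intro x hx L
      rw [div_div]
      congr 1
      calc x * x ^ (d-1) = x ^ (1:ℝ) * x ^ (d-1) := by rw [Real.rpow_one]
        _ = x ^ (1+(d-1)) := (Real.rpow_add hx _ _).symm
        _ = x ^ d := by norm_num
    rw [key r hr, key s hs]
    have hrp : 0 < r ^ d := Real.rpow_pos_of_pos hr d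
    have hsp : 0 < s ^ d := Real.rpow_pos_of_pos hs d
    rw [div_le_div_iff₀ hsp hrp]
    have h8 : (s/r) ^ d = s ^ d / r ^ d := Real.div_rpow hs.le hr.le d
    rw [h8] at hle
    have h9 := mul_le_mul_of_nonneg_right hle hrp.le
    calc l s * r ^ d ≤ s ^ d / r ^ d * l r * r ^ d := h9
      _ = l r * s ^ d := by field_simp
end

section
/- Let f:(0,∞)→(0,∞) be a Kneser function of order d≥1. Then the left derivative f'_−(r) exists at every r>0 and the function r ↦ f'_−(r)/r^{d−1} is non-increasing: for 0<t≤r, f'_−(t)/t^{d−1} ≥ f'_−(r)/r^{d−1}. -/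
open Filter Set Topology

/-! Auxiliary definitions. -/

noncomputable def kP (f : ℝ → ℝ) (r ε : ℝ) : ℝ := f r - f (r * Real.exp (-ε))

noncomputable def kE (d ε : ℝ) : ℝ := 1 - Real.exp (-(d * ε))

lemma kE_zero (d : ℝ) : kE d 0 = 0 := by simp [kE]

lemma kE_mono {d : ℝ} (hd : 0 ≤ d) : Monotone (kE d) := by
  intro x y hxy
  have : Real.exp (-(d * y)) ≤ Real.exp (-(d * x)) := by
    apply Real.exp_le_exp.2; nlinarith
  simp only [kE]; linarith

lemma kE_pos {d ε : ℝ} (hd : 0 < d) (hε : 0 < ε) : 0 < kE d ε := by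
  have : Real.exp (-(d * ε)) < 1 := by
    rw [Real.exp_lt_one_iff]; nlinarith
  simp only [kE]; linarith

lemma kE_nonneg {d ε : ℝ} (hd : 0 < d) (hε : 0 ≤ ε) : 0 ≤ kE d ε := by
  rcases eq_or_lt_of_le hε with rfl | h
  · simp [kE_zero]
  · exact (kE_pos hd h).le

lemma kE_continuous (d : ℝ) : Continuous (kE d) := by
  unfold kE; fun_prop

/-- Kneser functions are nondecreasing on the positive reals. -/
lemma kneser_mono_s1 {f : ℝ → ℝ} {d : ℝ} (hd : 1 ≤ d) (hf : IsKneser f d)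
    {a b : ℝ} (ha : 0 < a) (hab : a ≤ b) : f a ≤ f b := by
  by_contra hcon
  push_neg at hcon
  have hb : 0 < b := lt_of_lt_of_le ha hab
  have hab' : a < b := by
    rcases eq_or_lt_of_le hab with rfl | h
    · exact absurd hcon (lt_irrefl _)
    · exact h
  set lam := b / a with hlam
  have hlam1 : 1 < lam := (one_lt_div ha).2 hab'
  have hlam_a : lam * a = b := div_mul_cancel₀ b ha.ne'
  have key : ∀ n : ℕ, f (lam ^ n * b) ≤ f b - n * (f a - f b) := by
    intro n
    induction n with
    | zero => simp
    | succ n ih =>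
      have hpow1 : (1:ℝ) ≤ lam ^ (n + 1) := one_le_pow₀ hlam1.le
      have h1 := hf.2 a b (lam ^ (n+1)) ha hab hpow1
      have hrpow : (1:ℝ) ≤ (lam ^ (n+1)) ^ d :=
        Real.one_le_rpow hpow1 (by linarith)
      have h2 : (lam ^ (n+1)) ^ d * (f b - f a) ≤ 1 * (f b - f a) := by
        nlinarith [hrpow]
      have h3 : lam ^ (n+1) * a = lam ^ n * b := by
        rw [pow_succ, mul_assoc, hlam_a]
      rw [h3] at h1
      push_cast
      nlinarith
  obtain ⟨n, hn⟩ := exists_nat_gt (f b / (f a - f b))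
  have hc : 0 < f a - f b := by linarith
  have h4 : f b / (f a - f b) < n := hn
  have h5 : f b < n * (f a - f b) := by
    rw [div_lt_iff₀ hc] at h4; linarith
  have h6 := key n
  have h7 : 0 < f (lam ^ n * b) := hf.1 _ (by positivity)
  linarith

/-- The fundamental shift inequality. -/
lemma kneser_shift {f : ℝ → ℝ} {d : ℝ} (hf : IsKneser f d) {r : ℝ} (hr : 0 < r)
    {s δ : ℝ} (hs : 0 ≤ s) (hδ : 0 ≤ δ) :
    kP f r δ ≤ Real.exp (d * s) *
      (f (r * Real.exp (-s)) - f (r * Real.exp (-(s + δ)))) := by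
  have hexp : Real.exp (-(s+δ)) ≤ Real.exp (-s) := Real.exp_le_exp.2 (by linarith)
  have h := hf.2 (r * Real.exp (-(s+δ))) (r * Real.exp (-s)) (Real.exp s)
    (by positivity) (mul_le_mul_of_nonneg_left hexp hr.le) (Real.one_le_exp hs)
  have e1 : Real.exp s * (r * Real.exp (-s)) = r := by
    rw [show Real.exp s * (r * Real.exp (-s)) = r * (Real.exp (-s) * Real.exp s) by ring,
      ← Real.exp_add]
    simp
  have e2 : Real.exp s * (r * Real.exp (-(s+δ))) = r * Real.exp (-δ) := by
    rw [show Real.exp s * (r * Real.exp (-(s+δ))) = r * (Real.exp s * Real.exp (-(s+δ))) by ring,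
      ← Real.exp_add]
    ring_nf
  have e3 : (Real.exp s) ^ d = Real.exp (d * s) := by
    rw [← Real.exp_mul, mul_comm]
  rw [e1, e2, e3] at h
  exact h

lemma kneser_kP_nonneg {f : ℝ → ℝ} {d : ℝ} (hd : 1 ≤ d) (hf : IsKneser f d)
    {r : ℝ} (hr : 0 < r) {ε : ℝ} (hε : 0 ≤ ε) : 0 ≤ kP f r ε := by
  have h1 : r * Real.exp (-ε) ≤ r := by
    nlinarith [Real.exp_le_one_iff.mpr (by linarith : -ε ≤ 0), Real.exp_pos (-ε)]
  have := kneser_mono_s1 hd hf (by positivity : 0 < r * Real.exp (-ε)) h1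
  simp only [kP]; linarith

lemma kneser_kP_mono {f : ℝ → ℝ} {d : ℝ} (hd : 1 ≤ d) (hf : IsKneser f d)
    {r : ℝ} (hr : 0 < r) {ε₁ ε₂ : ℝ} (h12 : ε₁ ≤ ε₂) :
    kP f r ε₁ ≤ kP f r ε₂ := by
  have h1 : r * Real.exp (-ε₂) ≤ r * Real.exp (-ε₁) :=
    mul_le_mul_of_nonneg_left (Real.exp_le_exp.2 (by linarith)) hr.le
  have := kneser_mono_s1 hd hf (by positivity : 0 < r * Real.exp (-ε₂)) h1
  simp only [kP]; linarith

/-- Chain inequality: `kP (nε) / kE (nε) ≥ kP ε / kE ε`, in multiplied-out form. -/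
lemma kneser_chain_s1 {f : ℝ → ℝ} {d : ℝ} (hd : 1 ≤ d) (hf : IsKneser f d)
    {r : ℝ} (hr : 0 < r) {ε : ℝ} (hε : 0 ≤ ε) :
    ∀ n : ℕ, kP f r ε * kE d ((n : ℝ) * ε) ≤ kP f r ((n : ℝ) * ε) * kE d ε := by
  intro n
  induction n with
  | zero => simp [kE_zero, kP]
  | succ n ih =>
    have hd0 : (0:ℝ) < d := by linarith
    have hEnn : kE d (((n:ℝ)+1) * ε) = kE d ((n:ℝ) * ε) + Real.exp (-(d * ((n:ℝ)*ε))) * kE d ε := by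
      simp only [kE]
      rw [show (-(d * (((n:ℝ)+1) * ε))) = (-(d * ((n:ℝ)*ε))) + (-(d * ε)) by ring, Real.exp_add]
      ring
    have hshift := kneser_shift hf hr (s := (n:ℝ)*ε) (δ := ε) (by positivity) hε
    -- turn it into a lower bound for the increment
    have hexp_pos : (0:ℝ) < Real.exp (-(d * ((n:ℝ)*ε))) := Real.exp_pos _
    have hcancel : Real.exp (-(d * ((n:ℝ)*ε))) * Real.exp (d * ((n:ℝ)*ε)) = 1 := by
      rw [← Real.exp_add]; simp
    have hincr : Real.exp (-(d * ((n:ℝ)*ε))) * kP f r ε ≤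
        f (r * Real.exp (-((n:ℝ)*ε))) - f (r * Real.exp (-((n:ℝ)*ε + ε))) := by
      have := mul_le_mul_of_nonneg_left hshift hexp_pos.le
      calc Real.exp (-(d * ((n:ℝ)*ε))) * kP f r ε ≤
          Real.exp (-(d * ((n:ℝ)*ε))) * (Real.exp (d * ((n:ℝ)*ε)) *
            (f (r * Real.exp (-((n:ℝ)*ε))) - f (r * Real.exp (-((n:ℝ)*ε + ε))))) := this
        _ = f (r * Real.exp (-((n:ℝ)*ε))) - f (r * Real.exp (-((n:ℝ)*ε + ε))) := by
            rw [← mul_assoc, hcancel, one_mul]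
    have hPsum : kP f r (((n:ℝ)+1) * ε) =
        kP f r ((n:ℝ) * ε) + (f (r * Real.exp (-((n:ℝ)*ε))) - f (r * Real.exp (-((n:ℝ)*ε + ε)))) := by
      simp only [kP]
      rw [show (((n:ℝ)+1) * ε) = ((n:ℝ)*ε + ε) by ring]
      ring
    have hEε : 0 ≤ kE d ε := kE_nonneg hd0 hε
    have hPε : 0 ≤ kP f r ε := kneser_kP_nonneg hd hf hr hε
    push_cast
    push_cast at ih
    nlinarith [mul_le_mul_of_nonneg_right hincr hEε]

/-- Master almost-monotonicity inequality. -/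
lemma kneser_master {f : ℝ → ℝ} {d : ℝ} (hd : 1 ≤ d) (hf : IsKneser f d)
    {r : ℝ} (hr : 0 < r) {ε ε' : ℝ} (hε : 0 < ε) (hlt : ε < ε') :
    kP f r ε * kE d (ε' - ε) ≤ kP f r ε' * kE d ε := by
  have hd0 : (0:ℝ) < d := by linarith
  set n := ⌊ε' / ε⌋₊ with hn
  have hdiv1 : (1:ℝ) ≤ ε' / ε := by
    rw [le_div_iff₀ hε]; linarith
  have hn1 : 1 ≤ n := Nat.le_floor (by exact_mod_cast hdiv1)
  have hfl : (n : ℝ) ≤ ε' / ε := Nat.floor_le (by positivity)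
  have hfl' : ε' / ε < (n : ℝ) + 1 := Nat.lt_floor_add_one _
  have hnε_le : (n:ℝ) * ε ≤ ε' := by
    have := (le_div_iff₀ hε).mp hfl
    linarith
  have hnε_ge : ε' - ε ≤ (n:ℝ) * ε := by
    have := (div_lt_iff₀ hε).mp hfl'
    nlinarith
  have hPε : 0 ≤ kP f r ε := kneser_kP_nonneg hd hf hr hε.le
  have h1 : kP f r ε * kE d (ε' - ε) ≤ kP f r ε * kE d ((n:ℝ) * ε) :=
    mul_le_mul_of_nonneg_left (kE_mono hd0.le hnε_ge) hPε
  have h2 := kneser_chain_s1 hd hf hr hε.le n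
  have h3 : kP f r ((n:ℝ) * ε) * kE d ε ≤ kP f r ε' * kE d ε :=
    mul_le_mul_of_nonneg_right (kneser_kP_mono hd hf hr hnε_le) (kE_nonneg hd0 hε.le)
  linarith

/-- The quotient `kP ε / kE ε` converges as `ε → 0⁺`. -/
lemma kneser_tendsto_Q {f : ℝ → ℝ} {d : ℝ} (hd : 1 ≤ d) (hf : IsKneser f d)
    {r : ℝ} (hr : 0 < r) :
    ∃ L : ℝ, 0 ≤ L ∧ Tendsto (fun ε => kP f r ε / kE d ε) (𝓝[>] (0:ℝ)) (𝓝 L) := by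
  have hd0 : (0:ℝ) < d := by linarith
  set Q : ℝ → ℝ := fun ε => kP f r ε / kE d ε with hQ
  set S : Set ℝ := Q '' Ioi 0 with hS
  have hne : S.Nonempty := ⟨Q 1, ⟨1, by norm_num, rfl⟩⟩
  have hlb0 : ∀ q ∈ S, (0:ℝ) ≤ q := by
    rintro q ⟨ε, hε, rfl⟩
    exact div_nonneg (kneser_kP_nonneg hd hf hr (le_of_lt hε)) (kE_nonneg hd0 (le_of_lt hε))
  have hbdd : BddBelow S := ⟨0, hlb0⟩
  set L := sInf S with hL
  have hL0 : 0 ≤ L := le_csInf hne hlb0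
  refine ⟨L, hL0, ?_⟩
  rw [tendsto_order]
  constructor
  · intro c hc
    filter_upwards [self_mem_nhdsWithin] with ε hε
    exact lt_of_lt_of_le hc (csInf_le hbdd ⟨ε, hε, rfl⟩)
  · intro c hc
    obtain ⟨q, hqS, hqc⟩ := exists_lt_of_csInf_lt hne (by rw [← hL]; exact hc)
    obtain ⟨ε', hε', rfl⟩ := hqS
    have hε'0 : (0:ℝ) < ε' := hε'
    have hEε' : (0:ℝ) < kE d ε' := kE_pos hd0 hε'0
    -- the comparison function tends to Q ε' < c
    have hcont : Tendsto (fun ε : ℝ => kP f r ε' / kE d (ε' - ε)) (𝓝[>] (0:ℝ)) (𝓝 (Q ε')) := by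
      have h1 : Tendsto (fun ε : ℝ => ε' - ε) (𝓝 (0:ℝ)) (𝓝 ε') := by
        simpa using (tendsto_const_nhds.sub tendsto_id : Tendsto (fun ε : ℝ => ε' - ε) (𝓝 0) (𝓝 (ε' - 0)))
      have h2 : Tendsto (fun ε : ℝ => kE d (ε' - ε)) (𝓝 (0:ℝ)) (𝓝 (kE d ε')) :=
        ((kE_continuous d).tendsto ε').comp h1
      have h3 : Tendsto (fun ε : ℝ => kP f r ε' / kE d (ε' - ε)) (𝓝 (0:ℝ))
          (𝓝 (kP f r ε' / kE d ε')) := tendsto_const_nhds.div h2 hEε'.ne'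
      exact h3.mono_left nhdsWithin_le_nhds
    have hev1 : ∀ᶠ ε in 𝓝[>] (0:ℝ), kP f r ε' / kE d (ε' - ε) < c :=
      hcont.eventually_lt_const hqc
    filter_upwards [hev1, Ioo_mem_nhdsGT_of_mem (by constructor <;> linarith : (0:ℝ) ∈ Ico 0 ε')]
      with ε h1 h2
    have hε0 : 0 < ε := h2.1
    have hεε' : ε < ε' := h2.2
    have hEε : 0 < kE d ε := kE_pos hd0 hε0
    have hEs : 0 < kE d (ε' - ε) := kE_pos hd0 (by linarith)
    have hm := kneser_master hd hf hr hε0 hεε'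
    have : Q ε ≤ kP f r ε' / kE d (ε' - ε) := by
      rw [hQ]
      rw [div_le_div_iff₀ hEε hEs]
      linarith
    linarith

/-- A `HasDerivWithinAt` on `Iio r` gives convergence of the left difference quotient. -/
lemma tendsto_quot_of_hasDeriv {f : ℝ → ℝ} {D r : ℝ}
    (h : HasDerivWithinAt f D (Iio r) r) :
    Tendsto (fun x => (f r - f x) / (r - x)) (𝓝[<] r) (𝓝 D) := by
  have h2 := hasDerivWithinAt_iff_tendsto_slope.mp h
  rw [show Iio r \ {r} = Iio r from diff_singleton_eq_self (by simp)] at h2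
  refine h2.congr fun x => ?_
  rw [slope_def_field, ← neg_div_neg_eq, neg_sub, neg_sub]

/-- Existence of the left derivative. -/
lemma kneser_exists_deriv {f : ℝ → ℝ} {d : ℝ} (hd : 1 ≤ d) (hf : IsKneser f d)
    {r : ℝ} (hr : 0 < r) :
    ∃ D : ℝ, HasDerivWithinAt f D (Iio r) r := by
  have hd0 : (0:ℝ) < d := by linarith
  obtain ⟨L, hL0, hQ⟩ := kneser_tendsto_Q hd hf hr
  refine ⟨L * d / r, ?_⟩
  rw [hasDerivWithinAt_iff_tendsto_slope,
    show Iio r \ {r} = Iio r from diff_singleton_eq_self (by simp)]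
  -- the reparametrization ε(x) = log r - log x
  have hεmap : Tendsto (fun x : ℝ => Real.log r - Real.log x) (𝓝[<] r) (𝓝[>] (0:ℝ)) := by
    apply tendsto_nhdsWithin_of_tendsto_nhds_of_eventually_within
    · have : Tendsto (fun x : ℝ => Real.log r - Real.log x) (𝓝 r) (𝓝 (Real.log r - Real.log r)) :=
        tendsto_const_nhds.sub (Real.continuousAt_log hr.ne').tendsto
      rw [sub_self] at this
      exact this.mono_left nhdsWithin_le_nhds
    · filter_upwards [Ioo_mem_nhdsLT_of_mem (by constructor <;> linarith : r ∈ Ioc (0:ℝ) r)]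
        with x hx
      exact sub_pos.2 (Real.log_lt_log hx.1 hx.2)
  -- limit of (1 - exp(-(c ε)))/ε at 0⁺ is c
  have hslope : ∀ c : ℝ, Tendsto (fun ε : ℝ => (1 - Real.exp (-(c * ε))) / ε)
      (𝓝[>] (0:ℝ)) (𝓝 c) := by
    intro c
    have h1 : HasDerivAt (fun ε : ℝ => 1 - Real.exp (-(c * ε))) c 0 := by
      have h2 : HasDerivAt (fun ε : ℝ => -(c * ε)) (-c) 0 := by
        simpa using ((hasDerivAt_id (0:ℝ)).const_mul (-c))
      have h3 := h2.exp
      have h4 := (hasDerivAt_const (0:ℝ) (1:ℝ)).sub h3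
      convert h4 using 1 <;> first | rfl | simp
    have h5 := hasDerivAt_iff_tendsto_slope.mp h1
    have h6 : 𝓝[>] (0:ℝ) ≤ 𝓝[≠] (0:ℝ) := nhdsWithin_mono _ (fun x hx => ne_of_gt hx)
    refine (h5.mono_left h6).congr fun ε => ?_
    rw [slope_def_field]
    simp
  -- the main composite function
  set T : ℝ → ℝ := fun ε => (kP f r ε / kE d ε) * ((1 - Real.exp (-(d * ε))) / ε)
    / ((1 - Real.exp (-ε)) / ε) / r with hT
  have hTl : Tendsto T (𝓝[>] (0:ℝ)) (𝓝 (L * d / r)) := by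
    have := ((hQ.mul (hslope d)).div (hslope 1) one_ne_zero).div_const r
    simpa using this
  have hcomp := hTl.comp hεmap
  refine hcomp.congr' ?_
  filter_upwards [Ioo_mem_nhdsLT_of_mem (by constructor <;> linarith : r ∈ Ioc (0:ℝ) r)]
    with x hx
  have hx0 : 0 < x := hx.1
  have hxr : x < r := hx.2
  set ε := Real.log r - Real.log x with hε
  have hε0 : 0 < ε := sub_pos.2 (Real.log_lt_log hx0 hxr)
  have hxe : r * Real.exp (-ε) = x := by
    rw [hε, neg_sub, Real.exp_sub, Real.exp_log hx0, Real.exp_log hr]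
    field_simp
  have hE : kE d ε = 1 - Real.exp (-(d * ε)) := rfl
  have hEpos : 0 < kE d ε := kE_pos hd0 hε0
  have h1e : Real.exp (-ε) = x / r := by
    field_simp at hxe ⊢
    linarith [hxe]
  have hden : 1 - Real.exp (-ε) = (r - x) / r := by
    rw [h1e]
    field_simp
  -- compute T ε
  have hdE : (1 - Real.exp (-(d * ε))) ≠ 0 := by
    have : 0 < kE d ε := hEpos
    simp only [kE] at this
    linarith
  have hrx : r - x ≠ 0 := by intro hc; linarith [sub_eq_zero.mp hc]
  have hxr' : x - r ≠ 0 := by intro hc; linarith [sub_eq_zero.mp hc]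
  show kP f r ε / kE d ε * ((1 - Real.exp (-(d * ε))) / ε)
      / ((1 - Real.exp (-ε)) / ε) / r = slope f r x
  rw [slope_def_field]
  simp only [kP, kE, hxe, hden]
  field_simp
  ring

theorem kneser_leftDeriv_exists_and_antitone (f : ℝ → ℝ) (d : ℝ) (hd : 1 ≤ d)
    (hf : IsKneser f d) :
    (∀ r : ℝ, 0 < r → ∃ D : ℝ, HasDerivWithinAt f D (Set.Iio r) r) ∧
    ∀ t r : ℝ, 0 < t → t ≤ r →
      derivWithin f (Set.Iio r) r / r ^ (d - 1) ≤ derivWithin f (Set.Iio t) t / t ^ (d - 1) := by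
  have hex : ∀ r : ℝ, 0 < r → ∃ D : ℝ, HasDerivWithinAt f D (Set.Iio r) r :=
    fun r hr => kneser_exists_deriv hd hf hr
  refine ⟨hex, ?_⟩
  intro t r ht htr
  have hr : 0 < r := lt_of_lt_of_le ht htr
  obtain ⟨Dr, hDr⟩ := hex r hr
  obtain ⟨Dt, hDt⟩ := hex t ht
  have hDr' : derivWithin f (Set.Iio r) r = Dr := hDr.derivWithin (uniqueDiffWithinAt_Iio r)
  have hDt' : derivWithin f (Set.Iio t) t = Dt := hDt.derivWithin (uniqueDiffWithinAt_Iio t)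
  rw [hDr', hDt']
  set lam := r / t with hlam
  have hlam1 : 1 ≤ lam := by rw [hlam, le_div_iff₀ ht]; linarith
  have hlam0 : 0 < lam := by linarith
  have hlamt : lam * t = r := div_mul_cancel₀ r ht.ne'
  -- convergence of quotients
  have tr : Tendsto (fun x => (f r - f x) / (r - x)) (𝓝[<] r) (𝓝 Dr) :=
    tendsto_quot_of_hasDeriv hDr
  have tt : Tendsto (fun x => (f t - f x) / (t - x)) (𝓝[<] t) (𝓝 Dt) :=
    tendsto_quot_of_hasDeriv hDt
  -- compose with h ↦ r - lam * h  and  h ↦ t - h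
  have hmap_r : Tendsto (fun h : ℝ => r - lam * h) (𝓝[>] (0:ℝ)) (𝓝[<] r) := by
    apply tendsto_nhdsWithin_of_tendsto_nhds_of_eventually_within
    · have : Tendsto (fun h : ℝ => r - lam * h) (𝓝 (0:ℝ)) (𝓝 (r - lam * 0)) :=
        tendsto_const_nhds.sub (tendsto_const_nhds.mul tendsto_id)
      simpa using this.mono_left nhdsWithin_le_nhds
    · filter_upwards [self_mem_nhdsWithin] with h hh
      have : 0 < lam * h := mul_pos hlam0 (mem_Ioi.mp hh)
      simp only [mem_Iio]; linarith
  have hmap_t : Tendsto (fun h : ℝ => t - h) (𝓝[>] (0:ℝ)) (𝓝[<] t) := by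
    apply tendsto_nhdsWithin_of_tendsto_nhds_of_eventually_within
    · have : Tendsto (fun h : ℝ => t - h) (𝓝 (0:ℝ)) (𝓝 (t - 0)) :=
        tendsto_const_nhds.sub tendsto_id
      simpa using this.mono_left nhdsWithin_le_nhds
    · filter_upwards [self_mem_nhdsWithin] with h hh
      simp only [mem_Iio]; linarith [mem_Ioi.mp hh]
  have comp_r : Tendsto (fun h : ℝ => (f r - f (r - lam * h)) / (lam * h))
      (𝓝[>] (0:ℝ)) (𝓝 Dr) := by
    have := tr.comp hmap_r
    refine this.congr fun h => ?_
    simp only [Function.comp]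
    ring_nf
  have comp_t : Tendsto (fun h : ℝ => (f t - f (t - h)) / h) (𝓝[>] (0:ℝ)) (𝓝 Dt) := by
    have := tt.comp hmap_t
    refine this.congr fun h => ?_
    simp only [Function.comp]
    ring_nf
  -- the eventual inequality
  have hineq : ∀ᶠ h in 𝓝[>] (0:ℝ),
      (f r - f (r - lam * h)) / (lam * h) ≤ lam ^ (d - 1) * ((f t - f (t - h)) / h) := by
    filter_upwards [Ioo_mem_nhdsGT_of_mem (by constructor <;> linarith : (0:ℝ) ∈ Ico 0 t)]
      with h hh
    have hh0 : 0 < h := hh.1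
    have hht : h < t := hh.2
    have key := hf.2 (t - h) t lam (by linarith) (by linarith) hlam1
    have e1 : lam * (t - h) = r - lam * h := by rw [mul_sub, hlamt]
    rw [hlamt, e1] at key
    have hld : lam ^ (d - 1) * lam = lam ^ d := by
      rw [← Real.rpow_add_one hlam0.ne' (d - 1)]
      norm_num
    have hpos : 0 < lam * h := by positivity
    rw [div_le_iff₀ hpos]
    have hcanc : (f t - f (t - h)) / h * h = f t - f (t - h) := div_mul_cancel₀ _ hh0.ne'
    have heq : lam ^ (d - 1) * ((f t - f (t - h)) / h) * (lam * h)
        = lam ^ d * (f t - f (t - h)) := by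
      calc lam ^ (d - 1) * ((f t - f (t - h)) / h) * (lam * h)
          = (lam ^ (d - 1) * lam) * ((f t - f (t - h)) / h * h) := by ring
        _ = lam ^ d * (f t - f (t - h)) := by rw [hld, hcanc]
    rw [heq]
    exact key
  have hDrDt : Dr ≤ lam ^ (d - 1) * Dt :=
    le_of_tendsto_of_tendsto comp_r (comp_t.const_mul _) hineq
  -- final algebra
  have hrp : (0:ℝ) < r ^ (d - 1) := Real.rpow_pos_of_pos hr _
  have htp : (0:ℝ) < t ^ (d - 1) := Real.rpow_pos_of_pos ht _
  have hlamrw : lam ^ (d - 1) = r ^ (d - 1) / t ^ (d - 1) := by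
    rw [hlam, Real.div_rpow hr.le ht.le]
  rw [div_le_div_iff₀ hrp htp]
  rw [hlamrw] at hDrDt
  have h2 : Dr * t ^ (d-1) ≤ (r ^ (d-1) / t ^ (d-1) * Dt) * t ^ (d-1) :=
    mul_le_mul_of_nonneg_right hDrDt htp.le
  have h3 : (r ^ (d-1) / t ^ (d-1) * Dt) * t ^ (d-1) = Dt * r ^ (d-1) := by
    field_simp
  rw [h3] at h2
  linarith
end

section
/- Let f be a Kneser function of order d≥1 and s∈(0,∞). If 0 < liminf_{r→0} f(r)/r^s ≤ limsup_{r→0} f(r)/r^s < ∞, then liminf_{r→0} f'_+(r)/r^{s−1} > 0. -/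
open Filter Set Topology

set_option maxHeartbeats 1000000

namespace KneserAux

variable {f : ℝ → ℝ} {d : ℝ}

lemma mono (hd : 1 ≤ d) (hf : IsKneser f d) :
    ∀ a b : ℝ, 0 < a → a ≤ b → f a ≤ f b := by
  intro a b ha hab
  by_contra hlt
  push_neg at hlt
  have hab' : a < b := by
    rcases eq_or_lt_of_le hab with rfl | h
    · exact absurd hlt (lt_irrefl _)
    · exact h
  set lam := b / a with hlam
  have hlam1 : 1 < lam := (one_lt_div ha).mpr hab'
  have hd0 : 0 ≤ d := le_trans zero_le_one hd
  have key : ∀ n : ℕ, f (lam ^ (n+1) * a) - f (lam ^ n * a) ≤ f b - f a := by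
    intro n
    have h1 : (1:ℝ) ≤ lam ^ n := one_le_pow₀ hlam1.le
    have hK := hf.2 a b (lam ^ n) ha hab h1
    have hb : lam ^ n * b = lam ^ (n+1) * a := by
      have : b = lam * a := by rw [hlam, div_mul_cancel₀ _ ha.ne']
      rw [this]; ring
    rw [hb] at hK
    have hpow : (1:ℝ) ≤ (lam ^ n) ^ d := Real.one_le_rpow h1 hd0
    nlinarith [hK, hpow]
  have sum : ∀ N : ℕ, f (lam ^ N * a) ≤ f a - N * (f a - f b) := by
    intro N
    induction N with
    | zero => simp
    | succ N ih =>
      have := key N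
      push_cast
      push_cast at ih
      linarith
  obtain ⟨N, hN⟩ := exists_nat_gt (f a / (f a - f b))
  have hδ : 0 < f a - f b := by linarith
  have hNδ : f a < N * (f a - f b) := by
    rw [div_lt_iff₀ hδ] at hN; linarith
  have hpos := hf.1 (lam ^ N * a) (by positivity)
  have := sum N
  linarith

lemma chainUp (hd : 1 ≤ d) (hf : IsKneser f d) {x h' : ℝ} (hx : 0 < x) (hh : 0 < h') :
    ∀ n : ℕ, f (x + n * h') - f x ≤ n * ((x + n * h') / x) ^ d * (f (x + h') - f x) := by
  have hd0 : 0 ≤ d := le_trans zero_le_one hd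
  intro n
  induction n with
  | zero => simp
  | succ n ih =>
    have hxn : (0:ℝ) < x + n * h' := by positivity
    have hxn1 : (0:ℝ) < x + (n+1) * h' := by positivity
    set lam := (x + n * h') / x with hlamdef
    have hlam : 1 ≤ lam := by
      rw [le_div_iff₀ hx]
      nlinarith [show (0:ℝ) ≤ (n:ℝ) from Nat.cast_nonneg n]
    have hbpos : (0:ℝ) < x + h' * x / (x + n * h') := by positivity
    have hble : x ≤ x + h' * x / (x + n * h') := le_add_of_nonneg_right (by positivity)
    have hK := hf.2 x (x + h' * x / (x + n * h')) lam hx hble hlam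
    have e1 : lam * x = x + n * h' := div_mul_cancel₀ _ hx.ne'
    have e2 : lam * (x + h' * x / (x + n * h')) = x + (n+1) * h' := by
      have h9 : lam * (h' * x / (x + n * h')) = h' := by
        rw [hlamdef]
        field_simp
      rw [mul_add, e1, h9]; ring
    rw [e1, e2] at hK
    have hmono1 : f (x + h' * x / (x + n * h')) ≤ f (x + h') := by
      apply mono hd hf _ _ hbpos
      have : h' * x / (x + n * h') ≤ h' := by
        rw [div_le_iff₀ hxn]
        nlinarith [mul_nonneg (mul_nonneg (show (0:ℝ) ≤ (n:ℝ) from Nat.cast_nonneg n) hh.le) hh.le]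
      linarith
    have hΔ : 0 ≤ f (x + h') - f x :=
      sub_nonneg.mpr (mono hd hf x (x + h') hx (by linarith))
    have hlam2 : ((x + n * h') / x) ^ d ≤ ((x + (n+1) * h') / x) ^ d := by
      apply Real.rpow_le_rpow (by positivity) _ hd0
      gcongr
      nlinarith [show (0:ℝ) ≤ (n:ℝ) from Nat.cast_nonneg n]
    have hlampos : (0:ℝ) ≤ lam ^ d := Real.rpow_nonneg (by positivity) d
    have hstep : f (x + (n+1) * h') - f (x + n * h') ≤ lam ^ d * (f (x + h') - f x) := by
      nlinarith [hK, hmono1, Real.rpow_nonneg (show (0:ℝ) ≤ lam by positivity) d]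
    push_cast
    push_cast at ih
    nlinarith [hstep, ih, hlam2, hΔ, hlampos, mul_le_mul_of_nonneg_left hlam2 (show (0:ℝ) ≤ (n:ℝ) from Nat.cast_nonneg n)]

end KneserAux

namespace KneserAux2
open Filter Set Topology KneserAux

variable {f : ℝ → ℝ} {d : ℝ}

lemma coverRight (hd : 1 ≤ d) (hf : IsKneser f d) {x h' : ℝ} (hx : 0 < x) (hh : 0 < h')
    (n : ℕ) (hn : 0 < n) (hδ : h' / n < x) :
    f (x + h') - f x ≤ n * ((x + h') / x) ^ d * (f x - f (x - h' / n)) := by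
  have hd0 : 0 ≤ d := le_trans zero_le_one hd
  set δ := h' / n with hδdef
  have hδ0 : 0 < δ := by positivity
  have hxδ : 0 < x - δ := by linarith
  have hnδ : (n : ℝ) * δ = h' := by
    rw [hδdef]; field_simp
  have hΔ0 : 0 ≤ f x - f (x - δ) := sub_nonneg.mpr (mono hd hf _ _ hxδ (by linarith))
  have key : ∀ i : ℕ, i < n →
      f (x + (i+1) * δ) - f (x + i * δ) ≤ ((x + h') / x) ^ d * (f x - f (x - δ)) := by
    intro i hi
    have hi' : ((i:ℝ)+1) ≤ n := by exact_mod_cast hi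
    set lam := (x + (i+1) * δ) / x with hlamdef
    have hipos : (0:ℝ) < x + (i+1) * δ := by positivity
    have hlam1 : 1 ≤ lam := by
      rw [le_div_iff₀ hx]
      nlinarith [show (0:ℝ) ≤ (i:ℝ) from Nat.cast_nonneg i]
    have hK := hf.2 (x - δ) x lam hxδ (by linarith) hlam1
    have e1 : lam * x = x + (i+1) * δ := div_mul_cancel₀ _ hx.ne'
    have hp_le : lam * (x - δ) ≤ x + i * δ := by
      have : lam * (x - δ) = (x + (i+1) * δ) - lam * δ := by
        rw [hlamdef]; field_simp
      rw [this]
      have : δ ≤ lam * δ := le_mul_of_one_le_left hδ0.le hlam1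
      linarith
    have hp_pos : 0 < lam * (x - δ) := mul_pos (by linarith) hxδ
    have hmono : f (lam * (x - δ)) ≤ f (x + i * δ) := mono hd hf _ _ hp_pos hp_le
    have hlam_le : lam ^ d ≤ ((x + h') / x) ^ d := by
      apply Real.rpow_le_rpow (by positivity) _ hd0
      rw [hlamdef]
      gcongr
      nlinarith [hnδ, hδ0.le, hi']
    rw [e1] at hK
    nlinarith [hK, hmono, hΔ0, hlam_le, Real.rpow_nonneg (show (0:ℝ) ≤ lam by positivity) d]
  have tele : ∑ i ∈ Finset.range n, (f (x + ((i:ℝ)+1) * δ) - f (x + i * δ)) =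
      f (x + (n:ℝ) * δ) - f x := by
    have h := Finset.sum_range_sub (fun i : ℕ => f (x + i * δ)) n
    push_cast at h
    rw [h]; norm_num
  have hsum : ∑ i ∈ Finset.range n, (f (x + (i+1) * δ) - f (x + i * δ)) ≤
      n * (((x + h') / x) ^ d * (f x - f (x - δ))) := by
    calc ∑ i ∈ Finset.range n, (f (x + (i+1) * δ) - f (x + i * δ))
        ≤ ∑ _i ∈ Finset.range n, ((x + h') / x) ^ d * (f x - f (x - δ)) :=
          Finset.sum_le_sum (fun i hi => key i (Finset.mem_range.mp hi))
      _ = n * (((x + h') / x) ^ d * (f x - f (x - δ))) := by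
          rw [Finset.sum_const, Finset.card_range]; simp [nsmul_eq_mul]
  have hfin : f (x + (n:ℝ) * δ) - f x ≤ n * (((x + h') / x) ^ d * (f x - f (x - δ))) := by
    rw [← tele]; exact hsum
  rw [hnδ] at hfin
  linarith [hfin, (mul_assoc (n:ℝ) (((x + h') / x) ^ d) (f x - f (x - δ))).symm.le]

lemma chainDown (hd : 1 ≤ d) (hf : IsKneser f d) {x δ : ℝ} (hx : 0 < x) (hδ : 0 < δ)
    (m : ℕ) (hm : (m : ℝ) * δ < x) :
    (m : ℝ) * (f x - f (x - δ)) ≤ (x / (x - m * δ)) ^ d * (f x - f (x - m * δ)) := by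
  have hd0 : 0 ≤ d := le_trans zero_le_one hd
  have hxm : 0 < x - m * δ := by linarith
  have key : ∀ i : ℕ, i < m →
      f x - f (x - δ) ≤ (x / (x - m * δ)) ^ d * (f (x - i * δ) - f (x - (i+1) * δ)) := by
    intro i hi
    have hi1 : ((i:ℝ) + 1) ≤ m := by exact_mod_cast hi
    have hi0 : (0:ℝ) ≤ i := Nat.cast_nonneg i
    have hia : 0 < x - (i+1) * δ := by nlinarith
    have hib : 0 < x - i * δ := by nlinarith
    set lam := x / (x - i * δ) with hlamdef
    have hlam1 : 1 ≤ lam := by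
      rw [le_div_iff₀ hib]; nlinarith
    have hK := hf.2 (x - (i+1) * δ) (x - i * δ) lam hia (by nlinarith) hlam1
    have e1 : lam * (x - i * δ) = x := div_mul_cancel₀ _ hib.ne'
    have e2 : lam * (x - (i+1) * δ) = x - δ * x / (x - i * δ) := by
      rw [hlamdef]; field_simp; ring
    rw [e1, e2] at hK
    have hδi : δ ≤ δ * x / (x - i * δ) := by
      rw [le_div_iff₀ hib]
      nlinarith [mul_nonneg (mul_nonneg hδ.le hi0) hδ.le]
    have hδi_pos : 0 < x - δ * x / (x - i * δ) := by
      have : lam * (x - (i+1) * δ) > 0 := mul_pos (by linarith) hia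
      rw [e2] at this; exact this
    have hmono : f (x - δ * x / (x - i * δ)) ≤ f (x - δ) :=
      mono hd hf _ _ hδi_pos (by linarith)
    have hΔi : 0 ≤ f (x - i * δ) - f (x - (i+1) * δ) :=
      sub_nonneg.mpr (mono hd hf _ _ hia (by nlinarith))
    have hlam_le : lam ^ d ≤ (x / (x - m * δ)) ^ d := by
      apply Real.rpow_le_rpow (by positivity) _ hd0
      rw [hlamdef, div_le_div_iff₀ hib hxm]
      nlinarith [mul_nonneg (mul_nonneg hx.le hδ.le) (show (0:ℝ) ≤ (m:ℝ) - i by linarith)]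
    nlinarith [hK, hmono, hΔi, hlam_le, Real.rpow_nonneg (show (0:ℝ) ≤ lam by positivity) d]
  have tele : ∑ i ∈ Finset.range m, (f (x - i * δ) - f (x - (i+1) * δ)) =
      f x - f (x - m * δ) := by
    have := Finset.sum_range_sub' (fun i => f (x - i * δ)) m
    simpa using this
  calc (m : ℝ) * (f x - f (x - δ))
      = ∑ _i ∈ Finset.range m, (f x - f (x - δ)) := by
        rw [Finset.sum_const, Finset.card_range]; simp [nsmul_eq_mul]
    _ ≤ ∑ i ∈ Finset.range m, (x / (x - m * δ)) ^ d * (f (x - i * δ) - f (x - (i+1) * δ)) :=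
        Finset.sum_le_sum (fun i hi => key i (Finset.mem_range.mp hi))
    _ = (x / (x - m * δ)) ^ d * (f x - f (x - m * δ)) := by
        rw [← Finset.mul_sum, tele]

end KneserAux2

namespace KneserAux3
open Filter Set Topology KneserAux KneserAux2

variable {f : ℝ → ℝ} {d : ℝ}

lemma low_bound (hd : 1 ≤ d) (hf : IsKneser f d) {s c C K x : ℝ}
    (hs : 0 < s) (hc : 0 < c) (hC : 0 < C) (hK1 : 1 ≤ K)
    (hKs : 2 * C ≤ c * (1 + K) ^ s) (hx : 0 < x)
    (hlowKx : c * ((1 + K) * x) ^ s ≤ f ((1 + K) * x))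
    (hupx : f x ≤ C * x ^ s) :
    ∀ h', 0 < h' → h' ≤ K * x →
      C / (2 * K * (1 + 2 * K) ^ d) * x ^ (s - 1) * h' ≤ f (x + h') - f x := by
  have hd0 : 0 ≤ d := le_trans zero_le_one hd
  have hK0 : 0 < K := lt_of_lt_of_le one_pos hK1
  have hP : 0 < (1 + 2 * K) ^ d := Real.rpow_pos_of_pos (by linarith) d
  have hXS : 0 < x ^ s := Real.rpow_pos_of_pos hx s
  have hX1 : 0 < x ^ (s - 1) := Real.rpow_pos_of_pos hx (s - 1)
  have hxs : x ^ s = x ^ (s - 1) * x := by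
    rw [← Real.rpow_add_one hx.ne' (s - 1)]; norm_num
  have step0 : C * x ^ s ≤ f ((1 + K) * x) - f x := by
    have e : ((1 + K) * x) ^ s = (1 + K) ^ s * x ^ s :=
      Real.mul_rpow (by linarith) hx.le
    rw [e] at hlowKx
    have hint := mul_le_mul_of_nonneg_right hKs hXS.le
    nlinarith [hlowKx, hupx, hint]
  intro h' hh1 hh2
  have hq : 0 < K * x / h' := by positivity
  obtain ⟨n, hn1, hn4⟩ : ∃ n : ℕ, K * x ≤ n * h' ∧ (n : ℝ) ≤ 2 * (K * x / h') := by
    refine ⟨⌈K * x / h'⌉₊, ?_, ?_⟩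
    · rw [← div_le_iff₀ hh1]; exact Nat.le_ceil _
    · have h2 := Nat.ceil_lt_add_one hq.le
      have h3 : (1 : ℝ) ≤ K * x / h' := (one_le_div hh1).mpr hh2
      linarith
  have hn2 : (n : ℝ) * h' ≤ 2 * (K * x) := by
    have h5 := mul_le_mul_of_nonneg_right hn4 hh1.le
    rw [mul_assoc, div_mul_cancel₀ _ hh1.ne'] at h5
    linarith
  have hcu := chainUp hd hf hx hh1 n
  have hmono2 : f ((1 + K) * x) ≤ f (x + n * h') :=
    mono hd hf _ _ (by positivity) (by nlinarith [hn1])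
  have hfac : ((x + n * h') / x) ^ d ≤ (1 + 2 * K) ^ d := by
    apply Real.rpow_le_rpow (by positivity) _ hd0
    rw [div_le_iff₀ hx]; nlinarith [hn2]
  have hΔ : 0 ≤ f (x + h') - f x :=
    sub_nonneg.mpr (mono hd hf x (x + h') hx (by linarith))
  have hn3 : (n : ℝ) ≤ 2 * K * x / h' := by
    rw [le_div_iff₀ hh1]; linarith [hn2]
  set Δ := f (x + h') - f x with hΔdef
  have key : C * x ^ s ≤ 2 * K * x / h' * (1 + 2 * K) ^ d * Δ := by
    have t1 : C * x ^ s ≤ (n : ℝ) * ((x + n * h') / x) ^ d * Δ := by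
      calc C * x ^ s ≤ f (x + n * h') - f x := by linarith [step0, hmono2]
        _ ≤ _ := hcu
    have t2 : (n : ℝ) * ((x + n * h') / x) ^ d * Δ ≤ (n : ℝ) * (1 + 2 * K) ^ d * Δ :=
      mul_le_mul_of_nonneg_right
        (mul_le_mul_of_nonneg_left hfac (Nat.cast_nonneg n)) hΔ
    have t3 : (n : ℝ) * (1 + 2 * K) ^ d * Δ ≤ 2 * K * x / h' * (1 + 2 * K) ^ d * Δ :=
      mul_le_mul_of_nonneg_right (mul_le_mul_of_nonneg_right hn3 hP.le) hΔ
    linarith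
  have key2 : C * x ^ (s - 1) * x * h' ≤ 2 * K * x * (1 + 2 * K) ^ d * Δ := by
    have t := mul_le_mul_of_nonneg_right key hh1.le
    have e1 : 2 * K * x / h' * (1 + 2 * K) ^ d * Δ * h' =
        2 * K * x * (1 + 2 * K) ^ d * Δ := by
      field_simp
    have e2 : C * x ^ s * h' = C * x ^ (s - 1) * x * h' := by rw [hxs]; ring
    rw [e1, e2] at t
    exact t
  have key3 : C * x ^ (s - 1) * h' ≤ 2 * K * (1 + 2 * K) ^ d * Δ := by
    have h0 : x * (C * x ^ (s - 1) * h') ≤ x * (2 * K * (1 + 2 * K) ^ d * Δ) := by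
      nlinarith [key2]
    exact le_of_mul_le_mul_left h0 hx
  rw [div_mul_eq_mul_div, div_mul_eq_mul_div, div_le_iff₀ (by positivity)]
  nlinarith [key3]

lemma up_bound (hd : 1 ≤ d) (hf : IsKneser f d) {s C x : ℝ}
    (hs : 0 < s) (hC : 0 < C) (hx : 0 < x)
    (hupx : f x ≤ C * x ^ s) :
    ∀ h', 0 < h' → h' ≤ x / 2 →
      f (x + h') - f x ≤ 3 * (3 : ℝ) ^ d * C * x ^ (s - 1) * h' := by
  have hd0 : 0 ≤ d := le_trans zero_le_one hd
  have hXS : 0 < x ^ s := Real.rpow_pos_of_pos hx s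
  have hX1 : 0 < x ^ (s - 1) := Real.rpow_pos_of_pos hx (s - 1)
  have hxs : x ^ s = x ^ (s - 1) * x := by
    rw [← Real.rpow_add_one hx.ne' (s - 1)]; norm_num
  intro h' hh1 hh2
  obtain ⟨n, hnpos, hn8⟩ : ∃ n : ℕ, 0 < n ∧ 8 * h' / x ≤ (n : ℝ) :=
    ⟨⌈8 * h' / x⌉₊, Nat.ceil_pos.mpr (by positivity), Nat.le_ceil _⟩
  have hnR : (0:ℝ) < n := by exact_mod_cast hnpos
  set δ := h' / n with hδdef
  have hδpos : 0 < δ := by positivity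
  have hnδ : (n : ℝ) * δ = h' := by rw [hδdef]; field_simp
  have hδ8 : δ ≤ x / 8 := by
    rw [hδdef, div_le_iff₀ hnR]
    have h9 := (div_le_iff₀ hx).mp hn8
    linarith
  have hδx : δ < x := by linarith
  obtain ⟨m, hm1, hm5⟩ : ∃ m : ℕ, (m : ℝ) * δ ≤ x / 2 ∧ x / 2 < ((m : ℝ) + 1) * δ := by
    refine ⟨⌊x / 2 / δ⌋₊, ?_, ?_⟩
    · have h6 := Nat.floor_le (show (0:ℝ) ≤ x / 2 / δ by positivity)
      calc (⌊x / 2 / δ⌋₊ : ℝ) * δ ≤ x / 2 / δ * δ := by nlinarith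
        _ = x / 2 := div_mul_cancel₀ _ hδpos.ne'
    · have h7 := Nat.lt_floor_add_one (x / 2 / δ)
      rw [← div_lt_iff₀ hδpos]
      exact_mod_cast h7
  have hm3 : 3 * x / 8 ≤ (m : ℝ) * δ := by nlinarith [hδ8, hm5]
  have hmδx : (m : ℝ) * δ < x := by linarith
  have hmpos : (0:ℝ) < m := by nlinarith [hm3, hx]
  have hxm : 0 < x - m * δ := by linarith
  have cover := coverRight hd hf hx hh1 n hnpos (by rw [← hδdef]; exact hδx)
  have down := chainDown hd hf hx hδpos m hmδx
  have bound1 : (x / (x - m * δ)) ^ d ≤ (2:ℝ) ^ d := by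
    apply Real.rpow_le_rpow (by positivity) _ hd0
    rw [div_le_iff₀ hxm]; linarith
  have hfm : 0 < f (x - m * δ) := hf.1 _ hxm
  have hE : 0 ≤ f x - f (x - m * δ) :=
    sub_nonneg.mpr (mono hd hf _ _ hxm (by linarith))
  have bound2 : f x - f (x - m * δ) ≤ C * x ^ s := by linarith
  have hΔ : 0 ≤ f x - f (x - δ) :=
    sub_nonneg.mpr (mono hd hf _ _ (by linarith) (by linarith))
  have hQ : ((x + h') / x) ^ d ≤ ((3:ℝ)/2) ^ d := by
    apply Real.rpow_le_rpow (by positivity) _ hd0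
    rw [div_le_iff₀ hx]; linarith
  have hQ0 : 0 ≤ ((x + h') / x) ^ d := Real.rpow_nonneg (by positivity) d
  have h2d : 0 ≤ (2:ℝ) ^ d := Real.rpow_nonneg (by norm_num) d
  have h32d : 0 ≤ ((3:ℝ)/2) ^ d := Real.rpow_nonneg (by norm_num) d
  have hmul : ((3:ℝ)/2) ^ d * (2:ℝ) ^ d = (3:ℝ) ^ d := by
    rw [← Real.mul_rpow (by norm_num) (by norm_num)]; norm_num
  -- m * Δ ≤ 2^d * (C * x^s)
  have downB : (m : ℝ) * (f x - f (x - δ)) ≤ (2:ℝ) ^ d * (C * x ^ s) := by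
    calc (m : ℝ) * (f x - f (x - δ)) ≤ (x / (x - m * δ)) ^ d * (f x - f (x - m * δ)) := down
      _ ≤ (2:ℝ) ^ d * (C * x ^ s) := mul_le_mul bound1 bound2 hE h2d
  -- chain
  have t1 : (m : ℝ) * (f (x + h') - f x) ≤
      (n : ℝ) * ((3:ℝ)/2) ^ d * ((2:ℝ) ^ d * (C * x ^ s)) := by
    have c1 : (m : ℝ) * (f (x + h') - f x) ≤
        (m : ℝ) * ((n : ℝ) * ((x + h') / x) ^ d * (f x - f (x - δ))) :=
      mul_le_mul_of_nonneg_left cover (Nat.cast_nonneg m)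
    have c2 : (m : ℝ) * ((n : ℝ) * ((x + h') / x) ^ d * (f x - f (x - δ))) =
        (n : ℝ) * ((x + h') / x) ^ d * ((m : ℝ) * (f x - f (x - δ))) := by ring
    have c3 : (n : ℝ) * ((x + h') / x) ^ d * ((m : ℝ) * (f x - f (x - δ))) ≤
        (n : ℝ) * ((x + h') / x) ^ d * ((2:ℝ) ^ d * (C * x ^ s)) :=
      mul_le_mul_of_nonneg_left downB (by positivity)
    have c4 : (n : ℝ) * ((x + h') / x) ^ d * ((2:ℝ) ^ d * (C * x ^ s)) ≤
        (n : ℝ) * ((3:ℝ)/2) ^ d * ((2:ℝ) ^ d * (C * x ^ s)) := by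
      apply mul_le_mul_of_nonneg_right _ (by positivity)
      exact mul_le_mul_of_nonneg_left hQ (Nat.cast_nonneg n)
    linarith
  have t5 : (n : ℝ) * ((3:ℝ)/2) ^ d * ((2:ℝ) ^ d * (C * x ^ s)) =
      (n : ℝ) * (3:ℝ) ^ d * C * (x ^ (s-1) * x) := by
    rw [← hxs]; linear_combination ((n:ℝ) * C * x ^ s) * hmul
  have t6 : (n:ℝ) * (3 * x) ≤ 8 * ((m:ℝ) * h') := by
    have h9 := mul_le_mul_of_nonneg_left hm3 (Nat.cast_nonneg n (α := ℝ))
    have e : (n:ℝ) * ((m:ℝ) * δ) = (m:ℝ) * h' := by rw [← hnδ]; ring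
    nlinarith [h9, e]
  have hpos3 : 0 ≤ (3:ℝ) ^ d * C * x ^ (s-1) := by positivity
  have t7 : (m:ℝ) * (f (x + h') - f x) ≤ (m:ℝ) * (3 * (3:ℝ) ^ d * C * x ^ (s-1) * h') := by
    have t8 : (n:ℝ) * (3:ℝ) ^ d * C * (x ^ (s-1) * x) ≤
        (m:ℝ) * (3 * (3:ℝ) ^ d * C * x ^ (s-1) * h') := by
      have h10 := mul_le_mul_of_nonneg_right t6 hpos3
      nlinarith [h10, mul_nonneg (mul_nonneg (Nat.cast_nonneg m (α := ℝ)) hh1.le) hpos3]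
    linarith [t1, t5.le, t5.ge]
  exact le_of_mul_le_mul_left t7 hmpos

end KneserAux3

namespace KneserAux4
open Filter Set Topology KneserAux KneserAux2 KneserAux3

variable {f : ℝ → ℝ} {d : ℝ}

lemma twoScale (hd : 1 ≤ d) (hf : IsKneser f d) {x : ℝ} (hx : 0 < x) :
    ∀ h h'' : ℝ, 0 < h'' → h'' ≤ h →
      (f (x + h) - f x) / h ≤
        (1 + h'' / h) * ((x + h + h'') / x) ^ d * ((f (x + h'') - f x) / h'') := by
  have hd0 : 0 ≤ d := le_trans zero_le_one hd
  intro h h'' hh'' hle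
  have hh : 0 < h := lt_of_lt_of_le hh'' hle
  obtain ⟨n, hn1, hn2⟩ : ∃ n : ℕ, h ≤ n * h'' ∧ (n : ℝ) * h'' ≤ h + h'' := by
    refine ⟨⌈h / h''⌉₊, ?_, ?_⟩
    · rw [← div_le_iff₀ hh'']; exact Nat.le_ceil _
    · have h2 := Nat.ceil_lt_add_one (show (0:ℝ) ≤ h / h'' by positivity)
      have h3 := mul_le_mul_of_nonneg_right (le_of_lt h2) hh''.le
      rw [add_mul, div_mul_cancel₀ _ hh''.ne'] at h3
      linarith
  have hcu := chainUp hd hf hx hh'' n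
  have hΔ : 0 ≤ f (x + h'') - f x :=
    sub_nonneg.mpr (mono hd hf x (x + h'') hx (by linarith))
  have hmono : f (x + h) ≤ f (x + n * h'') :=
    mono hd hf _ _ (by linarith) (by linarith)
  have hG0 : (0:ℝ) ≤ ((x + h + h'') / x) ^ d := Real.rpow_nonneg (by positivity) d
  have hfac : ((x + n * h'') / x) ^ d ≤ ((x + h + h'') / x) ^ d := by
    apply Real.rpow_le_rpow (by positivity) _ hd0
    exact div_le_div_of_nonneg_right (by linarith) hx.le
  set G := ((x + h + h'') / x) ^ d with hG
  have claim : (f (x + h) - f x) * h'' ≤ (h + h'') * G * (f (x + h'') - f x) := by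
    have t1 : f (x + h) - f x ≤ (n : ℝ) * G * (f (x + h'') - f x) := by
      calc f (x + h) - f x ≤ f (x + n * h'') - f x := by linarith
        _ ≤ (n : ℝ) * ((x + n * h'') / x) ^ d * (f (x + h'') - f x) := hcu
        _ ≤ (n : ℝ) * G * (f (x + h'') - f x) :=
            mul_le_mul_of_nonneg_right
              (mul_le_mul_of_nonneg_left hfac (Nat.cast_nonneg n)) hΔ
    have t2 := mul_le_mul_of_nonneg_right t1 hh''.le
    have t3 : (n : ℝ) * G * (f (x + h'') - f x) * h'' ≤
        (h + h'') * G * (f (x + h'') - f x) := by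
      have := mul_le_mul_of_nonneg_right hn2 (mul_nonneg hG0 hΔ)
      nlinarith [this]
    linarith
  rw [div_le_iff₀ hh]
  have e : (1 + h'' / h) * G * ((f (x + h'') - f x) / h'') * h =
      (h + h'') * G * (f (x + h'') - f x) / h'' := by
    field_simp
  rw [e, le_div_iff₀ hh'']
  exact claim

lemma exists_rightDeriv (hd : 1 ≤ d) (hf : IsKneser f d) {s c C K x : ℝ}
    (hs : 0 < s) (hc : 0 < c) (hC : 0 < C) (hK1 : 1 ≤ K)
    (hKs : 2 * C ≤ c * (1 + K) ^ s) (hx : 0 < x)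
    (hlowKx : c * ((1 + K) * x) ^ s ≤ f ((1 + K) * x))
    (hupx : f x ≤ C * x ^ s) :
    ∃ l : ℝ, HasDerivWithinAt f l (Ioi x) x ∧
      C / (2 * K * (1 + 2 * K) ^ d) * x ^ (s - 1) ≤ l := by
  have hK0 : 0 < K := lt_of_lt_of_le one_pos hK1
  have hX1 : 0 < x ^ (s - 1) := Real.rpow_pos_of_pos hx (s - 1)
  set c1 := C / (2 * K * (1 + 2 * K) ^ d) with hc1def
  have hc1 : 0 < c1 := by
    rw [hc1def]
    have := Real.rpow_pos_of_pos (show (0:ℝ) < 1 + 2 * K by linarith) d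
    positivity
  set u : ℝ → ℝ := fun h => (f (x + h) - f x) / h with hu
  have low := low_bound hd hf hs hc hC hK1 hKs hx hlowKx hupx
  have up := up_bound hd hf hs hC hx hupx
  have ev_mem : Ioo (0:ℝ) (x / 2) ∈ 𝓝[>] (0:ℝ) :=
    Ioo_mem_nhdsGT_of_mem ⟨le_refl 0, by positivity⟩
  have hlow' : ∀ᶠ h in 𝓝[>] (0:ℝ), c1 * x ^ (s - 1) ≤ u h := by
    filter_upwards [ev_mem] with h hh
    have h2 : h ≤ K * x := by nlinarith [hh.2, hh.1, hx, hK1]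
    rw [hu]
    rw [le_div_iff₀ hh.1]
    exact low h hh.1 h2
  have hup' : ∀ᶠ h in 𝓝[>] (0:ℝ), u h ≤ 3 * (3 : ℝ) ^ d * C * x ^ (s - 1) := by
    filter_upwards [ev_mem] with h hh
    rw [hu, div_le_iff₀ hh.1]
    have := up h hh.1 hh.2.le
    nlinarith [this]
  have hba : IsBoundedUnder (· ≤ ·) (𝓝[>] (0:ℝ)) u :=
    isBoundedUnder_of_eventually_le hup'
  have hbb : IsBoundedUnder (· ≥ ·) (𝓝[>] (0:ℝ)) u :=
    isBoundedUnder_of_eventually_ge hlow'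
  set l := liminf u (𝓝[>] (0:ℝ)) with hldef
  have hl1 : c1 * x ^ (s - 1) ≤ l :=
    le_liminf_of_le hba.isCoboundedUnder_ge hlow'
  have hl0 : 0 < l := lt_of_lt_of_le (by positivity) hl1
  have claim : ∀ t, l < t → ∀ᶠ h in 𝓝[>] (0:ℝ), u h ≤ t := by
    intro t ht
    set φ : ℝ → ℝ := fun e => (1 + e) * ((x + 2 * e) / x) ^ d * (l + e) with hφdef
    have hcont : ContinuousAt φ 0 := by
      have h1 : ContinuousAt (fun e : ℝ => (x + 2 * e) / x) 0 := by fun_prop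
      have h3 : ContinuousAt (fun e : ℝ => ((x + 2 * e) / x) ^ d) 0 :=
        h1.rpow_const (Or.inl (by positivity))
      exact (((continuousAt_const.add continuousAt_id).mul h3).mul
        (continuousAt_const.add continuousAt_id))
    have hφ0 : φ 0 = l := by
      simp [hφdef, div_self hx.ne', Real.one_rpow]
    have hev : ∀ᶠ e in 𝓝 (0:ℝ), φ e < t := by
      have hT := hcont.tendsto
      rw [hφ0] at hT
      exact Filter.Tendsto.eventually_lt_const ht hT
    obtain ⟨ε, hεφ1, hε0⟩ :
        ∃ ε : ℝ, (φ ε < t ∧ ε < 1) ∧ ε ∈ Ioi (0:ℝ) := by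
      have h4 : ∀ᶠ e in 𝓝[>] (0:ℝ), φ e < t ∧ e < 1 := by
        filter_upwards [hev.filter_mono nhdsWithin_le_nhds,
          Ioo_mem_nhdsGT_of_mem (show (0:ℝ) ∈ Ico (0:ℝ) 1 by norm_num)] with e he1 he2
        exact ⟨he1, he2.2⟩
      exact (h4.and self_mem_nhdsWithin).exists
    obtain ⟨hεφ, hε1⟩ := hεφ1
    rw [mem_Ioi] at hε0
    filter_upwards [Ioo_mem_nhdsGT_of_mem (show (0:ℝ) ∈ Ico (0:ℝ) ε from ⟨le_refl 0, hε0⟩)]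
      with h hh
    have hfreq : ∃ᶠ h'' in 𝓝[>] (0:ℝ), u h'' < l + ε :=
      frequently_lt_of_liminf_lt hba.isCoboundedUnder_ge (by linarith)
    obtain ⟨h'', hu'', hmem''⟩ := (hfreq.and_eventually
      (Ioo_mem_nhdsGT_of_mem (show (0:ℝ) ∈ Ico (0:ℝ) (ε * h) from
        ⟨le_refl 0, by nlinarith [hh.1, hε0]⟩))).exists
    have hh''0 : 0 < h'' := hmem''.1
    have hh''h : h'' ≤ h := by nlinarith [hmem''.2, hh.1, hε1]
    have hts := twoScale hd hf hx h h'' hh''0 hh''h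
    have hG0 : (0:ℝ) ≤ ((x + h + h'') / x) ^ d :=
      Real.rpow_nonneg (div_nonneg (by linarith [hh.1]) hx.le) d
    have hu''0 : 0 ≤ u h'' := by
      rw [hu]
      exact div_nonneg
        (sub_nonneg.mpr (mono hd hf x (x + h'') hx (by linarith))) hh''0.le
    have ha1 : 1 + h'' / h ≤ 1 + ε := by
      have : h'' / h ≤ ε := by
        rw [div_le_iff₀ hh.1]; nlinarith [hmem''.2]
      linarith
    have ha0 : (0:ℝ) ≤ 1 + h'' / h := by
      have := div_nonneg hh''0.le hh.1.le
      linarith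
    have hgle : ((x + h + h'') / x) ^ d ≤ ((x + 2 * ε) / x) ^ d := by
      apply Real.rpow_le_rpow (div_nonneg (by linarith) hx.le) _ (le_trans zero_le_one hd)
      apply div_le_div_of_nonneg_right _ hx.le
      have h6 : h'' < ε := by nlinarith [hmem''.2, hh.2, hε0, hε1]
      have h7 := hh.2
      linarith
    have hg20 : (0:ℝ) ≤ ((x + 2 * ε) / x) ^ d :=
      Real.rpow_nonneg (div_nonneg (by linarith) hx.le) d
    calc u h ≤ (1 + h'' / h) * ((x + h + h'') / x) ^ d * u h'' := hts
      _ ≤ (1 + ε) * ((x + h + h'') / x) ^ d * u h'' :=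
          mul_le_mul_of_nonneg_right (mul_le_mul_of_nonneg_right ha1 hG0) hu''0
      _ ≤ (1 + ε) * ((x + 2 * ε) / x) ^ d * u h'' :=
          mul_le_mul_of_nonneg_right
            (mul_le_mul_of_nonneg_left hgle (by linarith)) hu''0
      _ ≤ (1 + ε) * ((x + 2 * ε) / x) ^ d * (l + ε) :=
          mul_le_mul_of_nonneg_left hu''.le
            (mul_nonneg (by linarith) hg20)
      _ = φ ε := rfl
      _ ≤ t := hεφ.le
  have hlimsup : limsup u (𝓝[>] (0:ℝ)) ≤ l := by
    apply le_of_forall_gt_imp_ge_of_dense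
    intro t ht
    exact limsup_le_of_le hbb.isCoboundedUnder_le (claim t ht)
  have htend : Tendsto u (𝓝[>] (0:ℝ)) (𝓝 l) :=
    tendsto_of_le_liminf_of_limsup_le le_rfl hlimsup hba hbb
  have hmap : Tendsto (fun y : ℝ => y - x) (𝓝[>] x) (𝓝[>] (0:ℝ)) := by
    apply tendsto_nhdsWithin_of_tendsto_nhds_of_eventually_within
    · have h5 : Tendsto (fun y : ℝ => y - x) (𝓝 x) (𝓝 (x - x)) :=
        (Continuous.tendsto (continuous_id.sub continuous_const) x)
      simpa using h5.mono_left nhdsWithin_le_nhds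
    · filter_upwards [self_mem_nhdsWithin] with y hy
      exact sub_pos.mpr (mem_Ioi.mp hy)
  have hslope : Tendsto (slope f x) (𝓝[>] x) (𝓝 l) := by
    apply Filter.Tendsto.congr _ (htend.comp hmap)
    intro y
    show u (y - x) = slope f x y
    rw [hu, slope_def_field]
    simp only
    rw [show x + (y - x) = y by ring]
  refine ⟨l, ?_, hl1⟩
  rw [hasDerivWithinAt_iff_tendsto_slope]
  rw [Set.diff_singleton_eq_self (by simp)]
  exact hslope

end KneserAux4

theorem kneser_liminf_rightDeriv_pos (f : ℝ → ℝ) (d s : ℝ) (hd : 1 ≤ d)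
    (hf : IsKneser f d) (hs : 0 < s)
    (h1 : 0 < Filter.liminf (fun r : ℝ => ((f r / r ^ s : ℝ) : EReal)) (𝓝[>] (0 : ℝ)))
    (h2 : Filter.limsup (fun r : ℝ => ((f r / r ^ s : ℝ) : EReal)) (𝓝[>] (0 : ℝ)) < ⊤) :
    0 < Filter.liminf
        (fun r : ℝ => ((derivWithin f (Set.Ioi r) r / r ^ (s - 1) : ℝ) : EReal))
        (𝓝[>] (0 : ℝ)) := by
  obtain ⟨c, hc0, hcl⟩ := EReal.exists_between_coe_real h1
  have hc0' : (0:ℝ) < c := by exact_mod_cast hc0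
  obtain ⟨C, hCl, _⟩ := EReal.exists_between_coe_real h2
  have hev1 : ∀ᶠ r in 𝓝[>] (0:ℝ), (c : EReal) < ((f r / r ^ s : ℝ) : EReal) :=
    Filter.eventually_lt_of_lt_liminf hcl
  have hev2 : ∀ᶠ r in 𝓝[>] (0:ℝ), ((f r / r ^ s : ℝ) : EReal) < (C : EReal) :=
    Filter.eventually_lt_of_limsup_lt hCl
  have hev : ∀ᶠ r in 𝓝[>] (0:ℝ), c * r ^ s ≤ f r ∧ f r ≤ C * r ^ s := by
    filter_upwards [hev1, hev2, self_mem_nhdsWithin] with r hr1 hr2 hr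
    rw [mem_Ioi] at hr
    have hrs : (0:ℝ) < r ^ s := Real.rpow_pos_of_pos hr s
    have hr1' : c < f r / r ^ s := by exact_mod_cast hr1
    have hr2' : f r / r ^ s < C := by exact_mod_cast hr2
    constructor
    · rw [lt_div_iff₀ hrs] at hr1'; linarith
    · rw [div_lt_iff₀ hrs] at hr2'; linarith
  have hC0 : (0:ℝ) < C := by
    obtain ⟨r, hr, hrpos⟩ := (hev.and self_mem_nhdsWithin).exists
    have hrpos : (0:ℝ) < r := hrpos
    have hrs : (0:ℝ) < r ^ s := Real.rpow_pos_of_pos hrpos s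
    nlinarith [hr.1, hr.2, hf.1 r hrpos]
  obtain ⟨r0, hr0, hsub⟩ := mem_nhdsGT_iff_exists_Ioo_subset.mp hev
  rw [mem_Ioi] at hr0
  set K := max 1 ((2 * C / c) ^ (1 / s)) with hKdef
  have hK1 : (1:ℝ) ≤ K := le_max_left _ _
  have hK0 : (0:ℝ) < K := lt_of_lt_of_le one_pos hK1
  have hKs : 2 * C ≤ c * (1 + K) ^ s := by
    have h3 : (2 * C / c) ^ (1 / s) ≤ K := le_max_right _ _
    have h4 : ((2 * C / c) ^ (1 / s)) ^ s ≤ K ^ s :=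
      Real.rpow_le_rpow (Real.rpow_nonneg (by positivity) _) h3 hs.le
    have h5 : ((2 * C / c) ^ (1 / s)) ^ s = 2 * C / c := by
      rw [← Real.rpow_mul (by positivity), one_div, inv_mul_cancel₀ hs.ne', Real.rpow_one]
    have h6 : K ^ s ≤ (1 + K) ^ s :=
      Real.rpow_le_rpow (by positivity) (by linarith) hs.le
    have h7 : 2 * C / c ≤ (1 + K) ^ s := by
      rw [← h5]; linarith
    rw [div_le_iff₀ hc0'] at h7
    linarith [mul_le_mul_of_nonneg_left h7 hc0'.le]
  set c1 := C / (2 * K * (1 + 2 * K) ^ d) with hc1def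
  have hc1 : 0 < c1 := by
    rw [hc1def]
    have := Real.rpow_pos_of_pos (show (0:ℝ) < 1 + 2 * K by linarith) d
    positivity
  set x1 := r0 / (1 + K) with hx1def
  have hx1 : 0 < x1 := by rw [hx1def]; positivity
  have hkey : ∀ᶠ x in 𝓝[>] (0:ℝ),
      (c1 : EReal) ≤ ((derivWithin f (Set.Ioi x) x / x ^ (s - 1) : ℝ) : EReal) := by
    filter_upwards [Ioo_mem_nhdsGT_of_mem
      (show (0:ℝ) ∈ Ico (0:ℝ) x1 from ⟨le_refl 0, hx1⟩)] with x hx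
    have hx0 : 0 < x := hx.1
    have hxr0 : x < r0 := by
      have : x1 ≤ r0 := by
        rw [hx1def, div_le_iff₀ (show (0:ℝ) < 1 + K by linarith)]
        nlinarith [hr0]
      linarith [hx.2]
    have hKxr0 : (1 + K) * x < r0 := by
      have := hx.2
      rw [hx1def, lt_div_iff₀ (show (0:ℝ) < 1 + K by linarith)] at this
      linarith [this]
    have hmemx : x ∈ Set.Ioo 0 r0 := ⟨hx0, hxr0⟩
    have hmemKx : (1 + K) * x ∈ Set.Ioo 0 r0 := ⟨by positivity, hKxr0⟩
    obtain ⟨hfl, hfu⟩ := hsub hmemx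
    obtain ⟨hfl2, _⟩ := hsub hmemKx
    obtain ⟨l, hderiv, hlow⟩ := KneserAux4.exists_rightDeriv hd hf hs hc0' hC0 hK1 hKs
      hx0 hfl2 hfu
    have hdw : derivWithin f (Set.Ioi x) x = l :=
      hderiv.derivWithin (uniqueDiffWithinAt_Ioi x)
    rw [hdw]
    have hX1 : 0 < x ^ (s - 1) := Real.rpow_pos_of_pos hx0 (s - 1)
    have : c1 ≤ l / x ^ (s - 1) := by
      rw [le_div_iff₀ hX1, hc1def]
      exact hlow
    exact_mod_cast this
  have hle : (c1 : EReal) ≤ Filter.liminf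
      (fun r : ℝ => ((derivWithin f (Set.Ioi r) r / r ^ (s - 1) : ℝ) : EReal))
      (𝓝[>] (0 : ℝ)) := Filter.le_liminf_of_le (by isBoundedDefault) hkey
  calc (0 : EReal) < (c1 : EReal) := by exact_mod_cast hc1
    _ ≤ _ := hle
end

section
/- Let f be a Kneser function of order d≥1 and s∈(0,∞). If limsup_{r→0} f(r)/r^s < ∞, then limsup_{r→0} f'_−(r)/r^{s−1} ≤ d·limsup_{r→0} f(r)/r^s < ∞. -/
open Filter Set Topology

lemma kneser_incr (f : ℝ → ℝ) (d : ℝ) (hd : 1 ≤ d) (hf : IsKneser f d)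
    {r q : ℝ} (hr : 0 < r) (hq0 : 0 < q) (hq1 : q < 1) :
    f r - f (q * r) ≤ d * (1 - q) * f r := by
  have hd0 : (0:ℝ) < d := lt_of_lt_of_le one_pos hd
  set c : ℝ := q ^ d with hc
  have hc0 : 0 < c := Real.rpow_pos_of_pos hq0 d
  have hc1 : c < 1 := Real.rpow_lt_one hq0.le hq1 hd0
  set Δ : ℝ := f r - f (q * r) with hΔ
  -- step inequality
  have step : ∀ k : ℕ, c ^ k * Δ ≤ f (q ^ k * r) - f (q ^ (k+1) * r) := by
    intro k
    have hqk : (0:ℝ) < q ^ k := pow_pos hq0 k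
    have ha : 0 < q ^ (k+1) * r := by positivity
    have hab : q ^ (k+1) * r ≤ q ^ k * r := by
      have : q ^ (k+1) ≤ q ^ k := pow_le_pow_of_le_one hq0.le hq1.le (Nat.le_succ k)
      nlinarith
    have hlam : 1 ≤ (q⁻¹) ^ k := one_le_pow₀ (one_le_inv_iff₀.mpr ⟨hq0, hq1.le⟩)
    have h := hf.2 (q ^ (k+1) * r) (q ^ k * r) ((q⁻¹) ^ k) ha hab hlam
    have e1 : (q⁻¹) ^ k * (q ^ k * r) = r := by
      field_simp
      rw [one_div, ← mul_pow, inv_mul_cancel₀ hq0.ne', one_pow]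
    have e2 : (q⁻¹) ^ k * (q ^ (k+1) * r) = q * r := by
      rw [pow_succ]
      field_simp
      rw [← mul_pow, one_div, inv_mul_cancel₀ hq0.ne', one_pow]
    have e3 : ((q⁻¹) ^ k : ℝ) ^ d = (c ^ k)⁻¹ := by
      rw [inv_pow, Real.inv_rpow (pow_nonneg hq0.le k)]
      congr 1
      rw [← Real.rpow_natCast q k, ← Real.rpow_natCast c k, hc,
        ← Real.rpow_mul hq0.le, ← Real.rpow_mul hq0.le, mul_comm]
    rw [e1, e2, e3] at h
    have hck : (0:ℝ) < c ^ k := pow_pos hc0 k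
    calc c ^ k * Δ ≤ c ^ k * ((c ^ k)⁻¹ * (f (q ^ k * r) - f (q ^ (k+1) * r))) :=
          mul_le_mul_of_nonneg_left h hck.le
      _ = f (q ^ k * r) - f (q ^ (k+1) * r) := by field_simp
  have sum : ∀ N : ℕ, (∑ k ∈ Finset.range N, c ^ k) * Δ ≤ f r - f (q ^ N * r) := by
    intro N
    induction N with
    | zero => simp
    | succ n ih =>
      rw [Finset.sum_range_succ, add_mul]
      have := step n
      linarith
  have key : ∀ N : ℕ, Δ * (1 - c ^ N) ≤ (1 - c) * f r := by
    intro N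
    have hfpos : 0 < f (q ^ N * r) := hf.1 _ (by positivity)
    have h1 : (∑ k ∈ Finset.range N, c ^ k) * Δ ≤ f r := by
      have := sum N; linarith
    have hgeom : (∑ k ∈ Finset.range N, c ^ k) = (1 - c ^ N) / (1 - c) := by
      rw [geom_sum_eq hc1.ne N]
      rw [div_eq_div_iff (by linarith) (by linarith)]
      ring
    rw [hgeom, div_mul_eq_mul_div, div_le_iff₀ (by linarith)] at h1
    nlinarith
  have hlim : Tendsto (fun N : ℕ => Δ * (1 - c ^ N)) atTop (𝓝 (Δ * (1 - 0))) := by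
    exact (tendsto_const_nhds.sub (tendsto_pow_atTop_nhds_zero_of_lt_one hc0.le hc1)).const_mul Δ
  have hΔle : Δ ≤ (1 - c) * f r := by
    have := le_of_tendsto hlim (Eventually.of_forall key)
    simpa using this
  -- Bernoulli
  have hbern : 1 + d * (q - 1) ≤ c := by
    have := one_add_mul_self_le_rpow_one_add (by linarith : (-1:ℝ) ≤ q - 1) hd
    simpa using this
  have hfr : 0 < f r := hf.1 r hr
  nlinarith

lemma kneser_deriv_le (f : ℝ → ℝ) (d : ℝ) (hd : 1 ≤ d) (hf : IsKneser f d)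
    {r : ℝ} (hr : 0 < r) :
    derivWithin f (Iio r) r ≤ d * f r / r := by
  have hd0 : (0:ℝ) < d := lt_of_lt_of_le one_pos hd
  have hfr : 0 < f r := hf.1 r hr
  by_cases hdiff : DifferentiableWithinAt ℝ f (Iio r) r
  · have hderiv := hdiff.hasDerivWithinAt
    rw [hasDerivWithinAt_iff_tendsto_slope] at hderiv
    have hslope : ∀ x ∈ Ioo (0:ℝ) r, slope f x r ≤ d * f r / r := by
      intro x hx
      have hq0 : 0 < x / r := div_pos hx.1 hr
      have hq1 : x / r < 1 := (div_lt_one hr).mpr hx.2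
      have h := kneser_incr f d hd hf hr hq0 hq1
      rw [div_mul_cancel₀ _ hr.ne'] at h
      rw [slope_def_field]
      rw [div_le_div_iff₀ (by linarith [hx.2]) hr]
      have : d * (1 - x / r) * f r = d * f r * (r - x) / r := by
        field_simp
      rw [this, le_div_iff₀ hr] at h
      exact h
    have hne : (𝓝[Iio r \ {r}] r).NeBot := by
      rw [Set.diff_singleton_eq_self (by simp)]
      exact inferInstance
    refine le_of_tendsto hderiv ?_
    have hmem : Ioo (0:ℝ) r ∈ 𝓝[Iio r \ {r}] r := by
      rw [Set.diff_singleton_eq_self (by simp)]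
      have : Ioi (0:ℝ) ∈ 𝓝 r := Ioi_mem_nhds hr
      have h2 : Ioi (0:ℝ) ∈ 𝓝[Iio r] r := nhdsWithin_le_nhds this
      have h3 : Iio r ∈ 𝓝[Iio r] r := self_mem_nhdsWithin
      filter_upwards [h2, h3] with x h1 h2 using ⟨h1, h2⟩
    filter_upwards [hmem] with x hx
    have := hslope x hx
    rwa [slope_comm] at this
  · rw [derivWithin_zero_of_not_differentiableWithinAt hdiff]
    positivity

theorem kneser_limsup_leftDeriv_le (f : ℝ → ℝ) (d s : ℝ) (hd : 1 ≤ d)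
    (hf : IsKneser f d) (hs : 0 < s)
    (h2 : Filter.limsup (fun r : ℝ => ((f r / r ^ s : ℝ) : EReal)) (𝓝[>] (0 : ℝ)) < ⊤) :
    Filter.limsup (fun r : ℝ => ((derivWithin f (Set.Iio r) r / r ^ (s - 1) : ℝ) : EReal))
        (𝓝[>] (0 : ℝ)) ≤
      (d : EReal) * Filter.limsup (fun r : ℝ => ((f r / r ^ s : ℝ) : EReal)) (𝓝[>] (0 : ℝ)) ∧
    Filter.limsup (fun r : ℝ => ((derivWithin f (Set.Iio r) r / r ^ (s - 1) : ℝ) : EReal))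
        (𝓝[>] (0 : ℝ)) < ⊤ := by
  have hd0 : (0:ℝ) < d := lt_of_lt_of_le one_pos hd
  set F : ℝ → EReal := fun r : ℝ => ((f r / r ^ s : ℝ) : EReal) with hF
  set L : EReal := Filter.limsup F (𝓝[>] (0 : ℝ)) with hL
  have hpos : ∀ᶠ r in 𝓝[>] (0:ℝ), (0:EReal) ≤ F r := by
    filter_upwards [self_mem_nhdsWithin] with r (hr : 0 < r)
    have : 0 ≤ f r / r ^ s := le_of_lt (div_pos (hf.1 r hr) (Real.rpow_pos_of_pos hr s))
    show (0:EReal) ≤ ((f r / r ^ s : ℝ) : EReal)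
    exact_mod_cast this
  have hL0 : (0:EReal) ≤ L :=
    le_limsup_of_frequently_le hpos.frequently
  have hLne : L ≠ ⊥ := fun h => by simp [h] at hL0
  set l : ℝ := L.toReal with hl
  have hLl : L = (l : EReal) := (EReal.coe_toReal h2.ne hLne).symm
  -- pointwise eventual bound
  have hptwise : ∀ᶠ r in 𝓝[>] (0:ℝ),
      derivWithin f (Iio r) r / r ^ (s - 1) ≤ d * (f r / r ^ s) := by
    filter_upwards [self_mem_nhdsWithin] with r (hr : 0 < r)
    have h1 : derivWithin f (Iio r) r ≤ d * f r / r := kneser_deriv_le f d hd hf hr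
    have hrs : (0:ℝ) < r ^ (s-1) := Real.rpow_pos_of_pos hr _
    have hrs2 : r ^ s = r * r ^ (s-1) := by
      rw [show s = 1 + (s-1) by ring, Real.rpow_add hr, Real.rpow_one]
      ring_nf
    calc derivWithin f (Iio r) r / r ^ (s - 1) ≤ (d * f r / r) / r ^ (s-1) := by gcongr
      _ = d * (f r / r ^ s) := by rw [hrs2]; field_simp
  have main : Filter.limsup (fun r : ℝ => ((derivWithin f (Set.Iio r) r / r ^ (s - 1) : ℝ) : EReal))
      (𝓝[>] (0 : ℝ)) ≤ ((d * l : ℝ) : EReal) := by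
    refine le_of_forall_gt_imp_ge_of_dense fun c hc => ?_
    induction c with
    | bot => exact absurd hc (by simp)
    | top => exact le_top
    | coe c' =>
      have hc' : d * l < c' := by exact_mod_cast hc
      have hlm : L < ((c' / d : ℝ) : EReal) := by
        rw [hLl]; exact_mod_cast (lt_div_iff₀ hd0).mpr (by linarith [hc'])
      have hev : ∀ᶠ r in 𝓝[>] (0:ℝ), F r < ((c' / d : ℝ) : EReal) :=
        eventually_lt_of_limsup_lt hlm
      refine limsup_le_of_le (by isBoundedDefault) ?_
      filter_upwards [hev, hptwise] with r h1 h2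
      have h1' : f r / r ^ s < c' / d := by
        have h1'' : ((f r / r ^ s : ℝ) : EReal) < ((c' / d : ℝ) : EReal) := h1
        exact_mod_cast h1''
      have : derivWithin f (Iio r) r / r ^ (s-1) ≤ c' := by
        have := mul_lt_mul_of_pos_left h1' hd0
        rw [mul_div_cancel₀ _ hd0.ne'] at this
        linarith
      exact_mod_cast this
  have heq : (d : EReal) * L = ((d * l : ℝ) : EReal) := by
    rw [hLl, ← EReal.coe_mul]
  refine ⟨by rw [heq]; exact main, lt_of_le_of_lt main (EReal.coe_lt_top _)⟩
end

section
/- Let f be a Kneser function of order d≥1 and suppose lim_{r→0} f(r)/r^s = C for some constants s,C∈(0,∞). Then lim_{r→0} f'_+(r)/(s r^{s−1}) = C and lim_{r→0} f'_−(r)/(s r^{s−1}) = C. -/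
open Filter Set Topology

/-- A Kneser function of order 1 (with `m * _` instead of `m ^ (1:ℝ) * _`). -/
def KneserOne (h : ℝ → ℝ) : Prop :=
  (∀ x : ℝ, 0 < x → 0 < h x) ∧
  ∀ X Y m : ℝ, 0 < X → X ≤ Y → 1 ≤ m →
    h (m * Y) - h (m * X) ≤ m * (h Y - h X)

namespace KneserAux

theorem k1_monoOn {h : ℝ → ℝ} (hk : KneserOne h) : MonotoneOn h (Ioi (0:ℝ)) := by
  rintro X hX Y hY hXY
  rcases eq_or_lt_of_le hXY with rfl | hlt
  · exact le_refl _
  by_contra hcon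
  push_neg at hcon
  simp only [mem_Ioi] at hX hY
  set m := Y / X with hm
  have hm1 : 1 < m := (one_lt_div hX).2 hlt
  have hmX : m * X = Y := div_mul_cancel₀ _ (ne_of_gt hX)
  have key : ∀ n : ℕ, h (m ^ n * X) ≤ h X - n * (h X - h Y) := by
    intro n
    induction n with
    | zero => simp
    | succ n ih =>
      have hpow : (1:ℝ) ≤ m ^ n := one_le_pow₀ hm1.le
      have hki := hk.2 X Y (m ^ n) hX hXY hpow
      have h1 : m ^ n * Y = m ^ (n + 1) * X := by
        rw [← hmX]; ring
      have h2 : m ^ n * (h Y - h X) ≤ (h Y - h X) := by nlinarith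
      have h3 : h (m ^ (n+1) * X) ≤ h (m ^ n * X) + (h Y - h X) := by
        rw [← h1]; linarith
      push_cast
      linarith
  obtain ⟨n, hn⟩ := exists_nat_gt (h X / (h X - h Y))
  have hpos : 0 < h (m ^ n * X) :=
    hk.1 _ (mul_pos (pow_pos (lt_trans one_pos hm1) n) hX)
  have hXY' : 0 < h X - h Y := by linarith
  have : h X / (h X - h Y) < n := hn
  have : h X < n * (h X - h Y) := by
    rw [div_lt_iff₀ hXY'] at hn; linarith
  have := key n
  linarith

/-- continuity estimate from the left -/
theorem k1_down {h : ℝ → ℝ} (hk : KneserOne h) {r lam : ℝ} (hr : 0 < r) (hl : 1 ≤ lam)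
    (n : ℕ) : (n : ℝ) * (h r - h (r / lam)) ≤ lam ^ n * h r := by
  have hmono := k1_monoOn hk
  have hlam0 : (0:ℝ) < lam := lt_of_lt_of_le one_pos hl
  have hdiv : ∀ k : ℕ, (0:ℝ) < r / lam ^ k := fun k => div_pos hr (pow_pos hlam0 k)
  have key : ∀ k ∈ Finset.range n,
      h r - h (r / lam) ≤ lam ^ n * (h (r / lam ^ k) - h (r / lam ^ (k+1))) := by
    intro k hkmem
    have hkn : k < n := Finset.mem_range.1 hkmem
    have hpk : (1:ℝ) ≤ lam ^ k := one_le_pow₀ hl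
    have hXY : r / lam ^ (k+1) ≤ r / lam ^ k := by
      apply div_le_div_of_nonneg_left hr.le (pow_pos hlam0 k)
      exact pow_le_pow_right₀ hl (Nat.le_succ k)
    have hki := hk.2 (r / lam ^ (k+1)) (r / lam ^ k) (lam ^ k) (hdiv (k+1)) hXY hpk
    have e1 : lam ^ k * (r / lam ^ k) = r := by
      field_simp
    have e2 : lam ^ k * (r / lam ^ (k+1)) = r / lam := by
      rw [pow_succ]; field_simp
    rw [e1, e2] at hki
    have ht : 0 ≤ h (r / lam ^ k) - h (r / lam ^ (k+1)) := by
      have := hmono (mem_Ioi.2 (hdiv (k+1))) (mem_Ioi.2 (hdiv k)) hXY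
      linarith
    have hpkn : lam ^ k ≤ lam ^ n := pow_le_pow_right₀ hl hkn.le
    nlinarith
  calc (n : ℝ) * (h r - h (r / lam))
      = ∑ _k ∈ Finset.range n, (h r - h (r / lam)) := by
        rw [Finset.sum_const, nsmul_eq_mul, Finset.card_range]
    _ ≤ ∑ k ∈ Finset.range n, lam ^ n * (h (r / lam ^ k) - h (r / lam ^ (k+1))) :=
        Finset.sum_le_sum key
    _ = lam ^ n * (h r - h (r / lam ^ n)) := by
        rw [← Finset.mul_sum, Finset.sum_range_sub' (fun k => h (r / lam ^ k))]
        simp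
    _ ≤ lam ^ n * h r := by
        have h1 : 0 < h (r / lam ^ n) := hk.1 _ (hdiv n)
        have h2 : (0:ℝ) < lam ^ n := pow_pos hlam0 n
        nlinarith

theorem k1_left {h : ℝ → ℝ} (hk : KneserOne h) {B ε : ℝ} (hB : 0 < B) (hε : 0 < ε) :
    ∃ y : ℝ, 0 < y ∧ y < B ∧ h B - h y < ε := by
  have hhB : 0 < h B := hk.1 B hB
  obtain ⟨m, hm⟩ := exists_nat_gt (2 * h B / ε)
  have hm0 : (0:ℝ) < m := lt_trans (by positivity) hm
  set lam := (2:ℝ) ^ (m:ℝ)⁻¹ with hlamdef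
  have hlam1 : 1 < lam := by
    rw [hlamdef]
    exact Real.one_lt_rpow_iff_of_pos (by norm_num) |>.2 (Or.inl ⟨one_lt_two, inv_pos.2 hm0⟩)
  have hlampow : lam ^ m = 2 := by
    rw [hlamdef, ← Real.rpow_natCast ((2:ℝ) ^ (m:ℝ)⁻¹) m, ← Real.rpow_mul (by norm_num),
      inv_mul_cancel₀ (ne_of_gt hm0), Real.rpow_one]
  have hdown := k1_down hk hB hlam1.le m
  rw [hlampow] at hdown
  refine ⟨B / lam, div_pos hB (lt_trans one_pos hlam1), div_lt_self hB hlam1, ?_⟩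
  rw [div_lt_iff₀ hε] at hm
  by_contra hcon
  push_neg at hcon
  nlinarith

/-- three point inequality on a geometric grid -/
theorem k1_grid {h : ℝ → ℝ} (hk : KneserOne h) {A lam : ℝ} (hA : 0 < A) (hl : 1 < lam)
    (k l : ℕ) (hk1 : 1 ≤ k) (hl1 : 1 ≤ l) :
    (h (lam ^ (k + l) * A) - h (lam ^ k * A)) * (lam ^ k * A - A) ≤
      (lam ^ (k + l) * A - lam ^ k * A) * (h (lam ^ k * A) - h A) := by
  have hmono := k1_monoOn hk
  have hlam0 : (0:ℝ) < lam := lt_trans one_pos hl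
  set σ : ℕ → ℝ := fun j => h (lam ^ (j+1) * A) - h (lam ^ j * A) with hσ
  have hposA : ∀ j : ℕ, (0:ℝ) < lam ^ j * A := fun j => mul_pos (pow_pos hlam0 j) hA
  have hle : ∀ j : ℕ, lam ^ j * A ≤ lam ^ (j+1) * A := by
    intro j
    apply mul_le_mul_of_nonneg_right (pow_le_pow_right₀ hl.le (Nat.le_succ j)) hA.le
  have hσpos : ∀ j, 0 ≤ σ j := by
    intro j
    have := hmono (mem_Ioi.2 (hposA j)) (mem_Ioi.2 (hposA (j+1))) (hle j)
    simp only [hσ]; linarith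
  have hstep : ∀ i t : ℕ, σ (i + t) ≤ lam ^ t * σ i := by
    intro i t
    have hki := hk.2 (lam ^ i * A) (lam ^ (i+1) * A) (lam ^ t) (hposA i) (hle i)
      (one_le_pow₀ hl.le)
    have e1 : lam ^ t * (lam ^ (i+1) * A) = lam ^ (i + t + 1) * A := by
      rw [← mul_assoc, ← pow_add]
      congr 2
      omega
    have e2 : lam ^ t * (lam ^ i * A) = lam ^ (i + t) * A := by
      rw [← mul_assoc, ← pow_add]
      congr 2
      omega
    rw [e1, e2] at hki
    simpa [hσ] using hki
  have main : (h (lam ^ (k+l) * A) - h (lam ^ k * A)) * (∑ i ∈ Finset.range k, lam ^ i)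
      ≤ (∑ j ∈ Finset.range l, lam ^ (k + j)) * (h (lam ^ k * A) - h A) := by
    have t1 : h (lam ^ (k+l) * A) - h (lam ^ k * A) = ∑ j ∈ Finset.range l, σ (k + j) := by
      have e := Finset.sum_range_sub (fun j => h (lam ^ (k + j) * A)) l
      simp only [Nat.add_zero] at e
      rw [← e]
      exact Finset.sum_congr rfl fun j _ => by simp [hσ, ← Nat.add_assoc]
    have t2 : h (lam ^ k * A) - h A = ∑ i ∈ Finset.range k, σ i := by
      have := Finset.sum_range_sub (fun i => h (lam ^ i * A)) k
      simp only [pow_zero, one_mul] at this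
      rw [← this]
    rw [t1, t2, Finset.sum_mul_sum, Finset.sum_mul_sum]
    apply Finset.sum_le_sum
    intro j _
    apply Finset.sum_le_sum
    intro i hi
    have hi' := Finset.mem_range.1 hi
    have hik : i + (k + j - i) = k + j := by omega
    have hst := hstep i (k + j - i)
    rw [hik] at hst
    have hpnn : (0:ℝ) ≤ lam ^ i := (pow_pos hlam0 i).le
    calc σ (k+j) * lam ^ i ≤ (lam ^ (k + j - i) * σ i) * lam ^ i :=
          mul_le_mul_of_nonneg_right hst hpnn
      _ = lam ^ (k + j - i + i) * σ i := by rw [pow_add]; ring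
      _ = lam ^ (k+j) * σ i := by congr 2; omega
  have hc : (0:ℝ) ≤ (lam - 1) * A := mul_nonneg (by linarith) hA.le
  have e1 : lam ^ k * A - A = (∑ i ∈ Finset.range k, lam ^ i) * ((lam - 1) * A) := by
    linear_combination (-A) * geom_sum_mul lam k
  have e2 : lam ^ (k+l) * A - lam ^ k * A
      = (∑ j ∈ Finset.range l, lam ^ (k + j)) * ((lam - 1) * A) := by
    have hsum : ∑ j ∈ Finset.range l, lam ^ (k + j)
        = lam ^ k * ∑ j ∈ Finset.range l, lam ^ j := by
      rw [Finset.mul_sum]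
      exact Finset.sum_congr rfl fun j _ => by rw [pow_add]
    rw [hsum]
    linear_combination (-(A * lam ^ k)) * geom_sum_mul lam l
  calc (h (lam ^ (k+l) * A) - h (lam ^ k * A)) * (lam ^ k * A - A)
      = ((h (lam ^ (k+l) * A) - h (lam ^ k * A)) * (∑ i ∈ Finset.range k, lam ^ i))
          * ((lam - 1) * A) := by rw [e1]; ring
    _ ≤ ((∑ j ∈ Finset.range l, lam ^ (k + j)) * (h (lam ^ k * A) - h A))
          * ((lam - 1) * A) := mul_le_mul_of_nonneg_right main hc
    _ = (lam ^ (k + l) * A - lam ^ k * A) * (h (lam ^ k * A) - h A) := by rw [e2]; ring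

/-- the full three point slope inequality -/
theorem k1_slope {h : ℝ → ℝ} (hk : KneserOne h) {A B C : ℝ} (hA : 0 < A) (hAB : A < B)
    (hBC : B < C) :
    (h C - h B) * (B - A) ≤ (C - B) * (h B - h A) := by
  have hB : 0 < B := hA.trans hAB
  have hC0 : 0 < C := hB.trans hBC
  have hmono := k1_monoOn hk
  set L : ℝ := Real.log (C / A) with hLdef
  have hL0 : 0 < L := Real.log_pos ((one_lt_div hA).2 (hAB.trans hBC))
  set θ : ℝ := Real.log (B / A) / L with hθdef
  have hθ0 : 0 < θ := div_pos (Real.log_pos ((one_lt_div hA).2 hAB)) hL0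
  have hθL : θ * L = Real.log (B / A) := div_mul_cancel₀ _ (ne_of_gt hL0)
  have hθ1 : θ < 1 := by
    rw [hθdef, div_lt_one hL0, hLdef]
    apply Real.log_lt_log (by positivity)
    gcongr
  set lam : ℕ → ℝ := fun n => Real.exp (L / n) with hlam
  set kn : ℕ → ℕ := fun n => ⌊(n:ℝ) * θ⌋₊ with hkn
  set Bn : ℕ → ℝ := fun n => lam n ^ (kn n) * A with hBn
  have hlam1 : ∀ n : ℕ, 1 ≤ n → 1 < lam n := by
    intro n hn
    have hn0 : (0:ℝ) < n := by exact_mod_cast hn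
    rw [hlam]
    simp only
    rw [← Real.exp_zero]
    exact Real.exp_lt_exp.2 (by positivity)
  have hlampow : ∀ n j : ℕ, lam n ^ j = Real.exp (j * (L / n)) := by
    intro n j; rw [hlam]; simp only; rw [← Real.exp_nat_mul]
  have hBpos : ∀ n, 0 < Bn n := fun n => mul_pos (pow_pos (Real.exp_pos _) _) hA
  have hBnle : ∀ n : ℕ, 1 ≤ n → Bn n ≤ B := by
    intro n hn
    have hn0 : (0:ℝ) < n := by exact_mod_cast hn
    rw [hBn]; simp only
    rw [hlampow]
    have h1 : (kn n : ℝ) ≤ (n:ℝ) * θ := Nat.floor_le (by positivity)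
    have h2 : (kn n : ℝ) * (L / n) ≤ θ * L := by
      calc (kn n : ℝ) * (L / n) ≤ ((n:ℝ) * θ) * (L / n) := by
            apply mul_le_mul_of_nonneg_right h1 (by positivity)
        _ = θ * L := by field_simp
    calc Real.exp ((kn n) * (L/n)) * A ≤ Real.exp (θ * L) * A := by
          apply mul_le_mul_of_nonneg_right (Real.exp_le_exp.2 h2) hA.le
      _ = B := by rw [hθL, Real.exp_log (by positivity), div_mul_cancel₀ _ (ne_of_gt hA)]
  have hBngt : ∀ n : ℕ, 1 ≤ n → B * Real.exp (-(L/n)) ≤ Bn n := by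
    intro n hn
    have hn0 : (0:ℝ) < n := by exact_mod_cast hn
    rw [hBn]; simp only; rw [hlampow]
    have h1 : (n:ℝ) * θ < kn n + 1 := Nat.lt_floor_add_one _
    have h2 : θ * L - L / n ≤ (kn n : ℝ) * (L / n) := by
      have e : (n:ℝ) * θ * (L / n) = θ * L := by field_simp
      have hLn : 0 < L / n := div_pos hL0 hn0
      nlinarith
    calc B * Real.exp (-(L/n)) = Real.exp (θ * L - L/n) * A := by
          rw [Real.exp_sub, hθL, Real.exp_log (div_pos hB hA), Real.exp_neg]
          field_simp
      _ ≤ Real.exp ((kn n) * (L/n)) * A :=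
          mul_le_mul_of_nonneg_right (Real.exp_le_exp.2 h2) hA.le
  have hBtend : Tendsto Bn atTop (𝓝 B) := by
    have h0 : Tendsto (fun n : ℕ => L / n) atTop (𝓝 0) := tendsto_const_div_atTop_nhds_zero_nat L
    have h1 : Tendsto (fun n : ℕ => Real.exp (-(L / n))) atTop (𝓝 1) := by
      have hneg : Tendsto (fun n : ℕ => -(L / n)) atTop (𝓝 0) := by
        simpa using h0.neg
      have := (Real.continuous_exp.tendsto 0).comp hneg
      simpa [Function.comp_def] using this
    have hexp : Tendsto (fun n : ℕ => B * Real.exp (-(L / n))) atTop (𝓝 B) := by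
      have := h1.const_mul B
      simpa using this
    apply tendsto_of_tendsto_of_tendsto_of_le_of_le' hexp tendsto_const_nhds
    · exact eventually_atTop.2 ⟨1, hBngt⟩
    · exact eventually_atTop.2 ⟨1, hBnle⟩
  have hhBtend : Tendsto (fun n => h (Bn n)) atTop (𝓝 (h B)) := by
    apply tendsto_order.2
    constructor
    · intro l hl
      obtain ⟨y, hy0, hyB, hyε⟩ := k1_left hk hB (show 0 < h B - l by linarith)
      have hev : ∀ᶠ n in atTop, y < Bn n := hBtend.eventually (eventually_gt_nhds hyB)
      filter_upwards [hev] with n hn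
      have := hmono (mem_Ioi.2 hy0) (mem_Ioi.2 (hBpos n)) hn.le
      linarith
    · intro u hu
      filter_upwards [eventually_atTop.2 ⟨1, hBnle⟩] with n hn
      have := hmono (mem_Ioi.2 (hBpos n)) (mem_Ioi.2 hB) hn
      linarith
  have hineq : ∀ᶠ n in atTop,
      (h C - h (Bn n)) * (Bn n - A) ≤ (C - Bn n) * (h (Bn n) - h A) := by
    have hev1 : ∀ᶠ n : ℕ in atTop, (1:ℝ) ≤ (n:ℝ) * θ :=
      (Filter.Tendsto.atTop_mul_const hθ0 tendsto_natCast_atTop_atTop).eventually_ge_atTop 1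
    filter_upwards [hev1, eventually_ge_atTop 1] with n hn1 hn
    have hn0 : (0:ℝ) < n := by exact_mod_cast hn
    have hk1 : 1 ≤ kn n := by
      rw [hkn]; simp only
      rw [Nat.le_floor_iff (by positivity)]
      exact_mod_cast hn1
    have hkltn : kn n < n := by
      have h1 : (kn n : ℝ) ≤ (n:ℝ) * θ := Nat.floor_le (by positivity)
      have h2 : (n:ℝ) * θ < n := by nlinarith
      exact_mod_cast h1.trans_lt h2
    have hgrid := k1_grid hk hA (hlam1 n hn) (kn n) (n - kn n) hk1 (by omega)
    have hsum : kn n + (n - kn n) = n := by omega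
    rw [hsum] at hgrid
    have hlamn : lam n ^ n * A = C := by
      rw [hlampow]
      have e : ((n:ℝ)) * (L/n) = L := by field_simp
      rw [e, hLdef, Real.exp_log (by positivity), div_mul_cancel₀ _ (ne_of_gt hA)]
    rw [hlamn] at hgrid
    exact hgrid
  have t1 : Tendsto (fun n => (h C - h (Bn n)) * (Bn n - A)) atTop
      (𝓝 ((h C - h B) * (B - A))) :=
    (tendsto_const_nhds.sub hhBtend).mul (hBtend.sub tendsto_const_nhds)
  have t2 : Tendsto (fun n => (C - Bn n) * (h (Bn n) - h A)) atTop
      (𝓝 ((C - B) * (h B - h A))) :=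
    (tendsto_const_nhds.sub hBtend).mul (hhBtend.sub tendsto_const_nhds)
  exact le_of_tendsto_of_tendsto t1 t2 hineq

theorem k1_concave {h : ℝ → ℝ} (hk : KneserOne h) : ConcaveOn ℝ (Ioi (0:ℝ)) h := by
  apply concaveOn_of_slope_anti_adjacent (convex_Ioi 0)
  intro x y z hx _ hxy hyz
  have hx0 : 0 < x := mem_Ioi.1 hx
  rw [div_le_div_iff₀ (by linarith) (by linarith)]
  have h1 := k1_slope hk hx0 hxy hyz
  have h2 : (z - y) * (h y - h x) = (h y - h x) * (z - y) := mul_comm _ _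
  linarith

theorem k1_rderiv {h : ℝ → ℝ} (hk : KneserOne h) {y : ℝ} (hy : 0 < y) :
    ∃ L : ℝ, HasDerivWithinAt h L (Ioi y) y ∧
      (∀ z, y < z → (h z - h y) / (z - y) ≤ L) ∧
      (∀ x, 0 < x → x < y → L ≤ (h y - h x) / (y - x)) := by
  have hcon := k1_concave hk
  have hanti : ∀ z1 z2 : ℝ, y < z1 → z1 < z2 →
      (h z2 - h y) / (z2 - y) ≤ (h z1 - h y) / (z1 - y) := by
    intro z1 z2 h1 h2
    have hsec := hcon.neg.secant_mono (a := y) (x := z1) (y := z2) (mem_Ioi.2 hy)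
      (mem_Ioi.2 (hy.trans h1)) (mem_Ioi.2 (hy.trans (h1.trans h2)))
      (ne_of_gt h1) (ne_of_gt (h1.trans h2)) h2.le
    simp only [Pi.neg_apply] at hsec
    have e1 : (-h z1 - -h y) / (z1 - y) = -((h z1 - h y) / (z1 - y)) := by
      rw [← neg_div]; ring_nf
    have e2 : (-h z2 - -h y) / (z2 - y) = -((h z2 - h y) / (z2 - y)) := by
      rw [← neg_div]; ring_nf
    rw [e1, e2] at hsec
    linarith
  set q : ℝ → ℝ := fun z => (h z - h y) / (z - y) with hq
  have hne : (Ioo y (y+1)).Nonempty := ⟨y + 1/2, by constructor <;> linarith⟩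
  have hAnti : AntitoneOn q (Ioo y (y+1)) := by
    intro z1 hz1 z2 hz2 h12
    rcases eq_or_lt_of_le h12 with rfl | hlt
    · exact le_refl _
    · exact hanti z1 z2 hz1.1 hlt
  have hbdd : BddAbove (q '' Ioo y (y+1)) := by
    refine ⟨(h y - h (y/2)) / (y - y/2), ?_⟩
    rintro _ ⟨z, hz, rfl⟩
    exact hcon.slope_anti_adjacent (mem_Ioi.2 (by linarith)) (mem_Ioi.2 (hy.trans hz.1))
      (by linarith) hz.1
  have htend := hAnti.tendsto_nhdsWithin_Ioo_right hne hbdd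
  refine ⟨sSup (q '' Ioo y (y+1)), ?_, ?_, ?_⟩
  · rw [hasDerivWithinAt_iff_tendsto_slope]
    have hdiff : Ioi y \ {y} = Ioi y :=
      diff_singleton_eq_self (fun hmem => lt_irrefl y (mem_Ioi.1 hmem))
    rw [hdiff]
    exact htend.congr (fun z => (slope_def_field h y z).symm)
  · intro z hz
    apply ge_of_tendsto htend
    filter_upwards [Ioo_mem_nhdsGT hz] with w hw
    exact hanti w z hw.1 hw.2
  · intro x hx0 hxy
    apply le_of_tendsto htend
    filter_upwards [Ioo_mem_nhdsGT
      (show y < y+1 by linarith)] with w hw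
    exact hcon.slope_anti_adjacent (mem_Ioi.2 hx0) (mem_Ioi.2 (hy.trans hw.1)) hxy hw.1

theorem k1_lderiv {h : ℝ → ℝ} (hk : KneserOne h) {y : ℝ} (hy : 0 < y) :
    ∃ L : ℝ, HasDerivWithinAt h L (Iio y) y ∧
      (∀ z, y < z → (h z - h y) / (z - y) ≤ L) ∧
      (∀ x, 0 < x → x < y → L ≤ (h y - h x) / (y - x)) := by
  have hcon := k1_concave hk
  have hanti : ∀ x1 x2 : ℝ, 0 < x1 → x1 < x2 → x2 < y →
      (h y - h x2) / (y - x2) ≤ (h y - h x1) / (y - x1) := by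
    intro x1 x2 hx1 h12 h2y
    have hsec := hcon.neg.secant_mono (a := y) (x := x1) (y := x2) (mem_Ioi.2 hy)
      (mem_Ioi.2 hx1) (mem_Ioi.2 (hx1.trans h12)) (ne_of_lt (h12.trans h2y))
      (ne_of_lt h2y) h12.le
    simp only [Pi.neg_apply] at hsec
    have e1 : (-h x1 - -h y) / (x1 - y) = -((h y - h x1) / (y - x1)) := by
      rw [show x1 - y = -(y - x1) by ring, div_neg]
      congr 1
      ring_nf
    have e2 : (-h x2 - -h y) / (x2 - y) = -((h y - h x2) / (y - x2)) := by
      rw [show x2 - y = -(y - x2) by ring, div_neg]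
      congr 1
      ring_nf
    rw [e1, e2] at hsec
    linarith
  have hne : (Ioo (y/2) y).Nonempty := ⟨3*y/4, by constructor <;> linarith⟩
  have hAnti : AntitoneOn (slope h y) (Ioo (y/2) y) := by
    intro x1 hx1 x2 hx2 h12
    rcases eq_or_lt_of_le h12 with rfl | hlt
    · exact le_refl _
    rw [slope_comm h y x2, slope_comm h y x1, slope_def_field, slope_def_field]
    exact hanti x1 x2 (by linarith [hx1.1]) hlt hx2.2
  have hbdd : BddBelow ((slope h y) '' Ioo (y/2) y) := by
    refine ⟨(h (y+1) - h y) / (y + 1 - y), ?_⟩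
    rintro _ ⟨w, hw, rfl⟩
    rw [slope_comm, slope_def_field]
    exact hcon.slope_anti_adjacent (mem_Ioi.2 (by linarith [hw.1]))
      (mem_Ioi.2 (by linarith)) hw.2 (by linarith)
  have htend := hAnti.tendsto_nhdsWithin_Ioo_left hne hbdd
  refine ⟨sInf (slope h y '' Ioo (y/2) y), ?_, ?_, ?_⟩
  · rw [hasDerivWithinAt_iff_tendsto_slope]
    have hdiff : Iio y \ {y} = Iio y :=
      diff_singleton_eq_self (fun hmem => lt_irrefl y (mem_Iio.1 hmem))
    rw [hdiff]
    exact htend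
  · intro z hz
    apply ge_of_tendsto htend
    filter_upwards [Ioo_mem_nhdsLT
      (show y/2 < y by linarith)] with w hw
    rw [slope_comm, slope_def_field]
    exact hcon.slope_anti_adjacent (mem_Ioi.2 (by linarith [hw.1]))
      (mem_Ioi.2 (hy.trans hz)) hw.2 hz
  · intro x hx0 hxy
    apply le_of_tendsto htend
    filter_upwards [Ioo_mem_nhdsLT
      (show max (y/2) x < y from max_lt (by linarith) hxy)] with w hw
    rw [slope_comm, slope_def_field]
    exact hanti x w hx0 (lt_of_le_of_lt (le_max_right _ _) hw.1) hw.2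

/-- the transformed function -/
theorem hK_one {f : ℝ → ℝ} {d : ℝ} (hd : 1 ≤ d) (hf : IsKneser f d) :
    KneserOne (fun x => f (x ^ d⁻¹)) := by
  have hd0 : (0:ℝ) < d := lt_of_lt_of_le one_pos hd
  constructor
  · intro x hx; exact hf.1 _ (Real.rpow_pos_of_pos hx _)
  · intro X Y m hX hXY hm
    have hY : (0:ℝ) < Y := lt_of_lt_of_le hX hXY
    have hm0 : (0:ℝ) ≤ m := le_trans zero_le_one hm
    have h1 : (m * X) ^ d⁻¹ = m ^ d⁻¹ * X ^ d⁻¹ := Real.mul_rpow hm0 hX.le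
    have h2 : (m * Y) ^ d⁻¹ = m ^ d⁻¹ * Y ^ d⁻¹ := Real.mul_rpow hm0 hY.le
    have key := hf.2 (X ^ d⁻¹) (Y ^ d⁻¹) (m ^ d⁻¹)
      (Real.rpow_pos_of_pos hX _)
      (Real.rpow_le_rpow hX.le hXY (by positivity))
      (Real.one_le_rpow hm (by positivity))
    have h3 : (m ^ d⁻¹) ^ d = m := by
      rw [← Real.rpow_mul hm0, inv_mul_cancel₀ (ne_of_gt hd0), Real.rpow_one]
    simp only [h1, h2]
    rw [h3] at key
    exact key

theorem f_eq {f : ℝ → ℝ} {d : ℝ} (hd : 1 ≤ d) {r : ℝ} (hr : 0 < r) :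
    (fun x : ℝ => f (x ^ d⁻¹)) (r ^ d) = f r := by
  have hd0 : (0:ℝ) < d := lt_of_lt_of_le one_pos hd
  simp only
  rw [← Real.rpow_mul hr.le, mul_inv_cancel₀ (ne_of_gt hd0), Real.rpow_one]

/-- the sandwich lemma -/
theorem sandwich {f : ℝ → ℝ} {d s C : ℝ} (hd : 1 ≤ d) (hs : 0 < s) (hC : 0 < C)
    (hlim : Filter.Tendsto (fun r : ℝ => f r / r ^ s) (𝓝[>] (0 : ℝ)) (𝓝 C))
    (g : ℝ → ℝ)
    (hg : ∀ r lam : ℝ, 0 < r → 1 < lam →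
      (f (lam * r) - f r) / ((lam * r) ^ d - r ^ d) * (d * r ^ (d - 1)) ≤ g r ∧
      g r ≤ (f r - f (r / lam)) / (r ^ d - (r / lam) ^ d) * (d * r ^ (d - 1))) :
    Filter.Tendsto (fun r : ℝ => g r / (s * r ^ (s - 1))) (𝓝[>] (0 : ℝ)) (𝓝 C) := by
  have hd0 : (0:ℝ) < d := lt_of_lt_of_le one_pos hd
  have hscale : ∀ a : ℝ, 0 < a →
      Tendsto (fun r : ℝ => f (a * r) / r ^ s) (𝓝[>] (0:ℝ)) (𝓝 (C * a ^ s)) := by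
    intro a ha
    have hmap : Tendsto (fun r : ℝ => a * r) (𝓝[>] (0:ℝ)) (𝓝[>] (0:ℝ)) := by
      apply tendsto_nhdsWithin_of_tendsto_nhds_of_eventually_within
      · have h0 : Tendsto (fun r : ℝ => a * r) (𝓝 (0:ℝ)) (𝓝 (a * 0)) :=
          (continuous_const.mul continuous_id).tendsto (0:ℝ)
        rw [mul_zero] at h0
        exact h0.mono_left nhdsWithin_le_nhds
      · filter_upwards [self_mem_nhdsWithin] with r hr
        exact mul_pos ha hr
    have h1 : Tendsto (fun r : ℝ => f (a*r) / (a*r) ^ s) (𝓝[>] (0:ℝ)) (𝓝 C) := hlim.comp hmap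
    have h2 := h1.mul_const (a ^ s)
    apply h2.congr'
    filter_upwards [self_mem_nhdsWithin] with r hr
    have hr0 : (0:ℝ) < r := hr
    have e : (a*r) ^ s = a ^ s * r ^ s := Real.mul_rpow ha.le hr0.le
    have h5 : a ^ s ≠ 0 := ne_of_gt (Real.rpow_pos_of_pos ha s)
    have h6 : r ^ s ≠ 0 := ne_of_gt (Real.rpow_pos_of_pos hr0 s)
    rw [e]
    field_simp
  have hslope : ∀ p : ℝ,
      Tendsto (fun lam : ℝ => (lam ^ p - 1)/(lam - 1)) (𝓝[>] (1:ℝ)) (𝓝 p) := by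
    intro p
    have hderiv : HasDerivAt (fun x : ℝ => x ^ p) (p * (1:ℝ) ^ (p - 1)) 1 :=
      Real.hasDerivAt_rpow_const (Or.inl one_ne_zero)
    rw [Real.one_rpow, mul_one] at hderiv
    have h1 := hasDerivAt_iff_tendsto_slope.1 hderiv
    have h2 := h1.mono_left
      (nhdsWithin_mono 1 (fun x hx => mem_compl_singleton_iff.2 (ne_of_gt (mem_Ioi.1 hx))))
    apply h2.congr
    intro lam
    rw [slope_def_field, Real.one_rpow]
  have hlamd : ∀ lam : ℝ, 1 < lam → 1 < lam ^ d := by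
    intro lam hl
    exact (Real.one_lt_rpow_iff_of_pos (lt_trans one_pos hl)).2 (Or.inl ⟨hl, hd0⟩)
  have hpowd : Tendsto (fun lam : ℝ => lam ^ d) (𝓝[>] (1:ℝ)) (𝓝 1) := by
    have hc : ContinuousAt (fun x : ℝ => x ^ d) 1 :=
      Real.continuousAt_rpow_const 1 d (Or.inl one_ne_zero)
    have h0 : Tendsto (fun x : ℝ => x ^ d) (𝓝[>] (1:ℝ)) (𝓝 ((1:ℝ) ^ d)) :=
      hc.tendsto.mono_left nhdsWithin_le_nhds
    rwa [Real.one_rpow] at h0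
  have hLo : Tendsto (fun lam : ℝ => (C * lam ^ s - C) * (d / (s * (lam ^ d - 1))))
      (𝓝[>] (1:ℝ)) (𝓝 C) := by
    have hbase : Tendsto (fun lam : ℝ =>
        (C*d/s) * (((lam^s-1)/(lam-1)) / ((lam^d-1)/(lam-1))))
        (𝓝[>] (1:ℝ)) (𝓝 ((C*d/s) * (s/d))) :=
      (((hslope s).div (hslope d) (ne_of_gt hd0))).const_mul _
    have heq : (C*d/s) * (s/d) = C := by field_simp
    rw [heq] at hbase
    apply hbase.congr'
    filter_upwards [self_mem_nhdsWithin] with lam hlam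
    have hl1 : 1 < lam := hlam
    have h1 : lam - 1 ≠ 0 := sub_ne_zero.2 (ne_of_gt hl1)
    have h2 : lam ^ d - 1 ≠ 0 := sub_ne_zero.2 (ne_of_gt (hlamd lam hl1))
    field_simp
  have hHi : Tendsto (fun lam : ℝ => (C - C * (lam⁻¹) ^ s) * (d * lam ^ d / (s * (lam ^ d - 1))))
      (𝓝[>] (1:ℝ)) (𝓝 C) := by
    have hbase : Tendsto (fun lam : ℝ =>
        (-(C*d)/s) * ((((lam^(-s)-1)/(lam-1)) / ((lam^d-1)/(lam-1))) * lam ^ d))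
        (𝓝[>] (1:ℝ)) (𝓝 ((-(C*d)/s) * ((-s/d) * 1))) :=
      ((((hslope (-s)).div (hslope d) (ne_of_gt hd0))).mul hpowd).const_mul _
    have heq : (-(C*d)/s) * ((-s/d) * 1) = C := by field_simp
    rw [heq] at hbase
    apply hbase.congr'
    filter_upwards [self_mem_nhdsWithin] with lam hlam
    have hl1 : 1 < lam := hlam
    have hl0 : (0:ℝ) < lam := lt_trans one_pos hl1
    have h1 : lam - 1 ≠ 0 := sub_ne_zero.2 (ne_of_gt hl1)
    have h2 : lam ^ d - 1 ≠ 0 := sub_ne_zero.2 (ne_of_gt (hlamd lam hl1))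
    have h3 : (lam⁻¹) ^ s = (lam ^ s)⁻¹ := Real.inv_rpow hl0.le s
    have h4 : lam ^ (-s) = (lam ^ s)⁻¹ := Real.rpow_neg hl0.le s
    have h5 : lam ^ s ≠ 0 := ne_of_gt (Real.rpow_pos_of_pos hl0 s)
    rw [h3, h4]
    field_simp
    ring
  have key_lo : ∀ r lam : ℝ, 0 < r → 1 < lam →
      (f (lam * r) - f r) / ((lam * r) ^ d - r ^ d) * (d * r ^ (d - 1)) / (s * r ^ (s - 1))
        = (f (lam*r) / r ^ s - f r / r ^ s) * (d / (s * (lam ^ d - 1))) := by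
    intro r lam hr hl1
    have hl0 : (0:ℝ) < lam := lt_trans one_pos hl1
    have e1 : (lam*r) ^ d = lam ^ d * r ^ d := Real.mul_rpow hl0.le hr.le
    have e2 : r ^ (d-1) = r ^ d / r := by rw [Real.rpow_sub hr, Real.rpow_one]
    have e3 : r ^ (s-1) = r ^ s / r := by rw [Real.rpow_sub hr, Real.rpow_one]
    have h4 : lam ^ d - 1 ≠ 0 := sub_ne_zero.2 (ne_of_gt (hlamd lam hl1))
    have h5 : r ^ d ≠ 0 := ne_of_gt (Real.rpow_pos_of_pos hr d)
    have h6 : r ^ s ≠ 0 := ne_of_gt (Real.rpow_pos_of_pos hr s)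
    have h7 : r ≠ 0 := ne_of_gt hr
    have h8 : s ≠ 0 := ne_of_gt hs
    rw [e1, e2, e3]
    rw [show lam ^ d * r ^ d - r ^ d = r ^ d * (lam ^ d - 1) by ring]
    field_simp
  have key_hi : ∀ r lam : ℝ, 0 < r → 1 < lam →
      (f r - f (r / lam)) / (r ^ d - (r / lam) ^ d) * (d * r ^ (d - 1)) / (s * r ^ (s - 1))
        = (f r / r ^ s - f (lam⁻¹ * r) / r ^ s) * (d * lam ^ d / (s * (lam ^ d - 1))) := by
    intro r lam hr hl1
    have hl0 : (0:ℝ) < lam := lt_trans one_pos hl1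
    have e1 : (r/lam) ^ d = r ^ d / lam ^ d := Real.div_rpow hr.le hl0.le d
    have e2 : r ^ (d-1) = r ^ d / r := by rw [Real.rpow_sub hr, Real.rpow_one]
    have e3 : r ^ (s-1) = r ^ s / r := by rw [Real.rpow_sub hr, Real.rpow_one]
    have h4 : lam ^ d - 1 ≠ 0 := sub_ne_zero.2 (ne_of_gt (hlamd lam hl1))
    have h5 : r ^ d ≠ 0 := ne_of_gt (Real.rpow_pos_of_pos hr d)
    have h6 : r ^ s ≠ 0 := ne_of_gt (Real.rpow_pos_of_pos hr s)
    have h7 : r ≠ 0 := ne_of_gt hr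
    have h8 : s ≠ 0 := ne_of_gt hs
    have h9 : lam ^ d ≠ 0 := ne_of_gt (Real.rpow_pos_of_pos hl0 d)
    have e4 : r / lam = lam⁻¹ * r := by rw [div_eq_inv_mul]
    rw [e1, e2, e3, e4]
    rw [show r ^ d - r ^ d / lam ^ d = r ^ d * (lam ^ d - 1) / lam ^ d by field_simp]
    field_simp
  apply tendsto_order.2
  constructor
  · intro l hl
    obtain ⟨lam, hLol, hl1⟩ :=
      ((hLo.eventually (eventually_gt_nhds hl)).and self_mem_nhdsWithin).exists
    have hl1' : 1 < lam := hl1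
    have hl0 : (0:ℝ) < lam := lt_trans one_pos hl1'
    have hrtend : Tendsto (fun r : ℝ => (f (lam*r) / r ^ s - f r / r ^ s)
        * (d / (s * (lam ^ d - 1)))) (𝓝[>] (0:ℝ))
        (𝓝 ((C * lam ^ s - C) * (d / (s * (lam ^ d - 1))))) :=
      ((hscale lam hl0).sub hlim).mul_const _
    filter_upwards [hrtend.eventually (eventually_gt_nhds hLol), self_mem_nhdsWithin]
      with r hev hr
    have hr0 : (0:ℝ) < r := hr
    have hb := (hg r lam hr0 hl1').1
    have hpos : (0:ℝ) < s * r ^ (s-1) := mul_pos hs (Real.rpow_pos_of_pos hr0 _)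
    have hmono : (f (lam * r) - f r) / ((lam * r) ^ d - r ^ d) * (d * r ^ (d - 1))
        / (s * r ^ (s - 1)) ≤ g r / (s * r ^ (s - 1)) := by gcongr
    rw [key_lo r lam hr0 hl1'] at hmono
    exact lt_of_lt_of_le hev hmono
  · intro u hu
    obtain ⟨lam, hHiu, hl1⟩ :=
      ((hHi.eventually (eventually_lt_nhds hu)).and self_mem_nhdsWithin).exists
    have hl1' : 1 < lam := hl1
    have hl0 : (0:ℝ) < lam := lt_trans one_pos hl1'
    have hrtend : Tendsto (fun r : ℝ => (f r / r ^ s - f (lam⁻¹ * r) / r ^ s)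
        * (d * lam ^ d / (s * (lam ^ d - 1)))) (𝓝[>] (0:ℝ))
        (𝓝 ((C - C * (lam⁻¹) ^ s) * (d * lam ^ d / (s * (lam ^ d - 1))))) :=
      (hlim.sub (hscale lam⁻¹ (inv_pos.2 hl0))).mul_const _
    filter_upwards [hrtend.eventually (eventually_lt_nhds hHiu), self_mem_nhdsWithin]
      with r hev hr
    have hr0 : (0:ℝ) < r := hr
    have hb := (hg r lam hr0 hl1').2
    have hpos : (0:ℝ) < s * r ^ (s-1) := mul_pos hs (Real.rpow_pos_of_pos hr0 _)
    have hmono : g r / (s * r ^ (s - 1)) ≤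
        (f r - f (r / lam)) / (r ^ d - (r / lam) ^ d) * (d * r ^ (d - 1))
        / (s * r ^ (s - 1)) := by gcongr
    rw [key_hi r lam hr0 hl1'] at hmono
    exact lt_of_le_of_lt hmono hev

theorem deriv_bounds {f : ℝ → ℝ} {d : ℝ} (hd : 1 ≤ d) (hf : IsKneser f d) {r : ℝ}
    (hr : 0 < r) :
    (∀ lam, 1 < lam →
      (f (lam * r) - f r) / ((lam * r) ^ d - r ^ d) * (d * r ^ (d - 1))
        ≤ derivWithin f (Ioi r) r ∧
      derivWithin f (Ioi r) r
        ≤ (f r - f (r / lam)) / (r ^ d - (r / lam) ^ d) * (d * r ^ (d - 1))) ∧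
    (∀ lam, 1 < lam →
      (f (lam * r) - f r) / ((lam * r) ^ d - r ^ d) * (d * r ^ (d - 1))
        ≤ derivWithin f (Iio r) r ∧
      derivWithin f (Iio r) r
        ≤ (f r - f (r / lam)) / (r ^ d - (r / lam) ^ d) * (d * r ^ (d - 1))) := by
  have hd0 : (0:ℝ) < d := lt_of_lt_of_le one_pos hd
  set h : ℝ → ℝ := fun x => f (x ^ d⁻¹) with hh
  have hk : KneserOne h := hK_one hd hf
  have hfe : ∀ x : ℝ, 0 < x → h (x ^ d) = f x := by
    intro x hx
    rw [hh]
    exact f_eq hd hx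
  have hyd : (0:ℝ) < r ^ d := Real.rpow_pos_of_pos hr d
  have boundsOf : ∀ L : ℝ,
      (∀ z, r ^ d < z → (h z - h (r ^ d)) / (z - r ^ d) ≤ L) →
      (∀ x, 0 < x → x < r ^ d → L ≤ (h (r ^ d) - h x) / (r ^ d - x)) →
      ∀ lam, 1 < lam →
        (f (lam * r) - f r) / ((lam * r) ^ d - r ^ d) * (d * r ^ (d - 1))
          ≤ L * (d * r ^ (d-1)) ∧
        L * (d * r ^ (d-1))
          ≤ (f r - f (r / lam)) / (r ^ d - (r / lam) ^ d) * (d * r ^ (d - 1)) := by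
    intro L hlow hhigh lam hl1
    have hl0 : (0:ℝ) < lam := lt_trans one_pos hl1
    have hdr : (0:ℝ) ≤ d * r ^ (d-1) := by positivity
    constructor
    · have hz : r ^ d < (lam * r) ^ d :=
        Real.rpow_lt_rpow hr.le (by nlinarith) hd0
      have hb := hlow ((lam*r)^d) hz
      rw [hfe (lam*r) (by positivity), hfe r hr] at hb
      exact mul_le_mul_of_nonneg_right hb hdr
    · have hx0 : (0:ℝ) < (r/lam) ^ d := Real.rpow_pos_of_pos (by positivity) d
      have hxlt : (r/lam)^d < r^d :=
        Real.rpow_lt_rpow (by positivity) (div_lt_self hr hl1) hd0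
      have hb := hhigh _ hx0 hxlt
      rw [hfe (r/lam) (by positivity), hfe r hr] at hb
      exact mul_le_mul_of_nonneg_right hb hdr
  constructor
  · obtain ⟨L, hLd, hLlow, hLhigh⟩ := k1_rderiv hk hyd
    have hgd : HasDerivWithinAt (fun x : ℝ => x ^ d) (d * r ^ (d-1)) (Ioi r) r :=
      (Real.hasDerivAt_rpow_const (Or.inl hr.ne')).hasDerivWithinAt
    have hmaps : MapsTo (fun x : ℝ => x ^ d) (Ioi r) (Ioi (r ^ d)) := fun x hx =>
      mem_Ioi.2 (Real.rpow_lt_rpow hr.le (mem_Ioi.1 hx) hd0)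
    have hcomp := HasDerivWithinAt.comp r hLd hgd hmaps
    have hfd : HasDerivWithinAt f (L * (d * r ^ (d-1))) (Ioi r) r :=
      hcomp.congr (fun x hx => (hfe x (lt_trans hr (mem_Ioi.1 hx))).symm) (hfe r hr).symm
    have hD : derivWithin f (Ioi r) r = L * (d * r ^ (d-1)) :=
      hfd.derivWithin (uniqueDiffWithinAt_Ioi r)
    rw [hD]
    exact boundsOf L hLlow hLhigh
  · obtain ⟨L, hLd, hLlow, hLhigh⟩ := k1_lderiv hk hyd
    have hgd : HasDerivWithinAt (fun x : ℝ => x ^ d) (d * r ^ (d-1)) (Ioo 0 r) r :=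
      (Real.hasDerivAt_rpow_const (Or.inl hr.ne')).hasDerivWithinAt
    have hmaps : MapsTo (fun x : ℝ => x ^ d) (Ioo 0 r) (Iio (r ^ d)) := fun x hx =>
      mem_Iio.2 (Real.rpow_lt_rpow (le_of_lt hx.1) hx.2 hd0)
    have hcomp := HasDerivWithinAt.comp r hLd hgd hmaps
    have hfd : HasDerivWithinAt f (L * (d * r ^ (d-1))) (Ioo 0 r) r :=
      hcomp.congr (fun x hx => (hfe x hx.1).symm) (hfe r hr).symm
    have hset : Iio r =ᶠ[𝓝 r] Ioo 0 r := by
      apply Filter.eventuallyEq_set.2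
      filter_upwards [eventually_gt_nhds hr] with x hx
      simp only [mem_Iio, mem_Ioo]
      exact ⟨fun h2 => ⟨hx, h2⟩, fun h2 => h2.2⟩
    have huniq : UniqueDiffWithinAt ℝ (Ioo (0:ℝ) r) r := by
      apply uniqueDiffWithinAt_convex (convex_Ioo 0 r)
      · rw [interior_Ioo]
        exact nonempty_Ioo.2 hr
      · rw [closure_Ioo hr.ne]
        exact ⟨hr.le, le_refl r⟩
    have hD : derivWithin f (Iio r) r = L * (d * r ^ (d-1)) := by
      rw [derivWithin_congr_set hset]
      exact hfd.derivWithin huniq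
    rw [hD]
    exact boundsOf L hLlow hLhigh

end KneserAux

theorem kneser_deriv_tendsto_of_tendsto (f : ℝ → ℝ) (d s C : ℝ) (hd : 1 ≤ d)
    (hf : IsKneser f d) (hs : 0 < s) (hC : 0 < C)
    (hlim : Filter.Tendsto (fun r : ℝ => f r / r ^ s) (𝓝[>] (0 : ℝ)) (𝓝 C)) :
    Filter.Tendsto (fun r : ℝ => derivWithin f (Set.Ioi r) r / (s * r ^ (s - 1)))
        (𝓝[>] (0 : ℝ)) (𝓝 C) ∧
    Filter.Tendsto (fun r : ℝ => derivWithin f (Set.Iio r) r / (s * r ^ (s - 1)))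
        (𝓝[>] (0 : ℝ)) (𝓝 C) := by
  constructor
  · apply KneserAux.sandwich hd hs hC hlim
    intro r lam hr hl1
    exact (KneserAux.deriv_bounds hd hf hr).1 lam hl1
  · apply KneserAux.sandwich hd hs hC hlim
    intro r lam hr hl1
    exact (KneserAux.deriv_bounds hd hf hr).2 lam hl1
end
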